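/- arXiv:2410.11754 — 2 statements merged into one kernel-verified Lean document; each statement's English description precedes it below -/
import Mathlib

section
/- Let B ↷ (Y,ν) and C ↷ (Z,η) be p.m.p. actions of countable groups B and C on standard probability spaces, and let Λ be a subgroup of a countable group Γ. Suppose there exist (i) a set S ⊆ Γ of left coset representatives for Λ in Γ (i.e., S contains exactly one element of each coset γΛ) such that γS △ S is finite for every γ ∈ Γ, and (ii) a bi-cofinitely Λ-equivariant measure space isomorphism φ_Λ: (Y^Λ, ν^Λ) → (Z^Λ, η^Λ). Then, with respect to these actions of B and C, there exists a bi-cofinitely Γ-equivariant measure space isomorphism φ: (Y^Γ, ν^Γ) → (Z^Γ, η^Γ). -/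
/-!  Common definitions: wreath products, measured group actions, orbit equivalence,
measure equivalence, measurable splittings, cocycle superrigidity, and cofinitely
equivariant maps.  -/

open MeasureTheory Function Filter Set
open scoped ENNReal

namespace OEW


/-! ### Restricted direct sums and wreath products of groups -/

/-- The restricted direct sum `⊕_V B`: the subgroup of `V → B` consisting of finitely
supported functions (support = coordinates where the value is not `1`). -/
def dsum (V B : Type) [Group B] : Subgroup (V → B) where
  carrier := {f | (Function.mulSupport f).Finite}
  one_mem' := by
    simp [Function.mulSupport_one]
  mul_mem' := fun {f g} hf hg =>
    Set.Finite.subset (Set.Finite.union hf hg) (Function.mulSupport_mul f g)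
  inv_mem' := fun {f} hf => by simpa [Function.mulSupport_inv] using hf

variable {V B Γ : Type}

/-- The shift of a finitely supported function by `γ`. -/
def shiftSubtype [Group B] [Group Γ] [MulAction Γ V] (γ : Γ) (f : dsum V B) : dsum V B :=
  ⟨fun v => (f : V → B) (γ⁻¹ • v), by
    have h : (Function.mulSupport fun v => (f : V → B) (γ⁻¹ • v)) ⊆
        (fun v => γ⁻¹ • v) ⁻¹' Function.mulSupport (f : V → B) := fun v hv => hv
    exact Set.Finite.subset
      (Set.Finite.preimage ((MulAction.injective (γ⁻¹ : Γ)).injOn) f.2) h⟩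

/-- The shift by `γ` as an automorphism of the restricted direct sum. -/
def shiftEquiv [Group B] [Group Γ] [MulAction Γ V] (γ : Γ) : dsum V B ≃* dsum V B where
  toFun := shiftSubtype γ
  invFun := shiftSubtype γ⁻¹
  left_inv f := Subtype.ext (funext fun v => by simp [shiftSubtype])
  right_inv f := Subtype.ext (funext fun v => by simp [shiftSubtype])
  map_mul' f g := rfl

/-- The left shift action of `Γ` on `⊕_V B` as a homomorphism into the automorphism group. -/
def shiftHom (V B Γ : Type) [Group B] [Group Γ] [MulAction Γ V] :
    Γ →* MulAut (dsum V B) where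
  toFun γ := shiftEquiv γ
  map_one' := MulEquiv.ext fun f => Subtype.ext (funext fun v => by
    simp [shiftEquiv, shiftSubtype])
  map_mul' γ₁ γ₂ := MulEquiv.ext fun f => Subtype.ext (funext fun v => by
    simp [shiftEquiv, shiftSubtype, mul_smul] <;> rfl)

/-- The (restricted) permutational wreath product `B ≀_V Γ = (⊕_V B) ⋊ Γ`. -/
abbrev pwreath (V B Γ : Type) [Group B] [Group Γ] [MulAction Γ V] : Type :=
  SemidirectProduct (dsum V B) Γ (shiftHom V B Γ)

/-- The (restricted) regular wreath product `B ≀ Γ = (⊕_Γ B) ⋊ Γ`. -/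
abbrev wreath (B Γ : Type) [Group B] [Group Γ] : Type := pwreath Γ B Γ


/-- The shift ("generalized Bernoulli") action on `V → X`. -/
def shiftS [Group Γ] [MulAction Γ V] (γ : Γ) (x : V → X) : V → X :=
  fun v => x (γ⁻¹ • v)

variable {V B C Γ X Y Z : Type}

/-- The wreath product action: given an action `β : B → X → X`, the induced action of the
wreath product `B ≀_V Γ` on `V → X`. -/
def wreathSmul [Group B] [Group Γ] [MulAction Γ V] (β : B → X → X)
    (g : pwreath V B Γ) (x : V → X) : V → X :=
  fun v => β ((g.left : V → B) v) (x (g.right⁻¹ • v))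

/-- The coordinatewise action of the restricted direct sum `⊕_V B` on `V → X`. -/
def dsumSmul [Group B] (β : B → X → X) (b : dsum V B) (x : V → X) : V → X :=
  fun v => β ((b : V → B) v) (x v)

/-! ### Measured group actions, given by explicit action maps -/

/-- `a` is a measure preserving group action of `G` on `(X, μ)`. -/
def IsMpAction {G : Type} [Group G] [MeasurableSpace X] (a : G → X → X) (μ : Measure X) : Prop :=
  (∀ x, a 1 x = x) ∧ (∀ g h x, a (g * h) x = a g (a h x)) ∧ ∀ g, MeasurePreserving (a g) μ μ

/-- A probability measure preserving (p.m.p.) action. -/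
def IsPmpAction {G : Type} [Group G] [MeasurableSpace X] (a : G → X → X) (μ : Measure X) : Prop :=
  IsProbabilityMeasure μ ∧ IsMpAction a μ

/-- The action is (essentially) free. -/
def IsFreeAction {G : Type} [Group G] [MeasurableSpace X] (a : G → X → X) (μ : Measure X) : Prop :=
  ∀ᵐ x ∂μ, ∀ g : G, a g x = x → g = 1

/-- The action is ergodic: every invariant measurable set is null or conull. -/
def IsErgodicAction {G : Type} [Group G] [MeasurableSpace X] (a : G → X → X) (μ : Measure X) :
    Prop :=
  ∀ A : Set X, MeasurableSet A → (∀ g : G, a g ⁻¹' A = A) → μ A = 0 ∨ μ Aᶜ = 0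

/-- The action is totally ergodic: every infinite subgroup acts ergodically. -/
def IsTotallyErgodic {G : Type} [Group G] [MeasurableSpace X] (a : G → X → X) (μ : Measure X) :
    Prop :=
  ∀ H : Subgroup G, (H : Set G).Infinite → IsErgodicAction (fun (h : H) x => a (h : G) x) μ

/-- `φ` is a measure space isomorphism from `(X,μ)` to `(Y,ν)`: a measure preserving
measurable map admitting an a.e. two-sided measurable inverse. -/
def IsMeasureIso [MeasurableSpace X] [MeasurableSpace Y] (μ : Measure X) (ν : Measure Y)
    (φ : X → Y) : Prop :=
  MeasurePreserving φ μ ν ∧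
    ∃ ψ : Y → X, Measurable ψ ∧ (∀ᵐ x ∂μ, ψ (φ x) = x) ∧ (∀ᵐ y ∂ν, φ (ψ y) = y)

/-- `φ` is an orbit equivalence between the actions `a : G → X → X` and `b : H → Y → Y`:
a measure space isomorphism with `φ(G⬝x) = H⬝φ(x)` for a.e. `x`. -/
def IsOrbitEquivalence {G H : Type} [MeasurableSpace X] [MeasurableSpace Y]
    (a : G → X → X) (b : H → Y → Y) (μ : Measure X) (ν : Measure Y) (φ : X → Y) : Prop :=
  IsMeasureIso μ ν φ ∧
    ∀ᵐ x ∂μ, (∀ g : G, ∃ h : H, φ (a g x) = b h (φ x)) ∧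
      (∀ h : H, ∃ g : G, b h (φ x) = φ (a g x))

/-- The two actions are orbit equivalent. -/
def OrbitEquivalentActions {G H : Type} [MeasurableSpace X] [MeasurableSpace Y]
    (a : G → X → X) (b : H → Y → Y) (μ : Measure X) (ν : Measure Y) : Prop :=
  ∃ φ : X → Y, IsOrbitEquivalence a b μ ν φ

/-- `m` is the product, over the index set `ι`, of copies of the probability measure `ν`. -/
def IsProductMeasure {ι : Type} [MeasurableSpace X] (ν : Measure X) (m : Measure (ι → X)) :
    Prop :=
  IsProbabilityMeasure m ∧
    ∀ (s : Finset ι) (A : ι → Set X), (∀ i, MeasurableSet (A i)) →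
      m {x | ∀ i ∈ s, x i ∈ A i} = ∏ i ∈ s, ν (A i)

/-- A group is amenable if it admits a left translation invariant, finitely additive
probability measure defined on all of its subsets. -/
def IsAmenable (G : Type) [Group G] : Prop :=
  ∃ m : Set G → ℝ,
    (∀ A : Set G, 0 ≤ m A) ∧ m Set.univ = 1 ∧
    (∀ A B : Set G, Disjoint A B → m (A ∪ B) = m A + m B) ∧
    ∀ (g : G) (A : Set G), m ((g * ·) '' A) = m A

/-! ### Bundled p.m.p. actions on standard probability spaces -/

/-- A p.m.p. action of `G` on a standard probability space, bundled. -/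
structure PmpSystem (G : Type) [Group G] : Type 1 where
  (X : Type)
  [mX : MeasurableSpace X]
  (μ : Measure X)
  (act : G → X → X)
  (standardBorel : StandardBorelSpace X)
  (isProb : IsProbabilityMeasure μ)
  (pmp : IsMpAction act μ)

/-- The bundled action is (essentially) free. -/
def PmpSystem.Free {G : Type} [Group G] (S : PmpSystem G) : Prop :=
  ∀ᵐ x ∂S.μ, ∀ g : G, S.act g x = x → g = 1

/-- The bundled action is ergodic. -/
def PmpSystem.ErgodicAct {G : Type} [Group G] (S : PmpSystem G) : Prop :=
  ∀ A : Set S.X, MeasurableSet[S.mX] A → (∀ g : G, S.act g ⁻¹' A = A) → S.μ A = 0 ∨ S.μ Aᶜ = 0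

/-- Two countable groups are orbit equivalent if they admit orbit equivalent free ergodic
p.m.p. actions on standard probability spaces. -/
def GroupsOrbitEquivalent (G H : Type) [Group G] [Group H] : Prop :=
  ∃ (S : PmpSystem G) (T : PmpSystem H),
    letI := S.mX
    letI := T.mX
    S.Free ∧ T.Free ∧ S.ErgodicAct ∧ T.ErgodicAct ∧
      OrbitEquivalentActions S.act T.act S.μ T.μ

/-! ### Measure equivalence -/

/-- `s` is a measurable fundamental domain for the action `a` on `(Ω, m)`. -/
def IsFundDomain {G Ω : Type} [MeasurableSpace Ω] (a : G → Ω → Ω) (s : Set Ω)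
    (m : Measure Ω) : Prop :=
  MeasurableSet s ∧ (∀ᵐ x ∂m, ∃ g : G, a g x ∈ s) ∧
    ∀ g g' : G, g ≠ g' → m (a g '' s ∩ a g' '' s) = 0

/-- A measure equivalence coupling of `G` with `H`: commuting measure preserving actions on
a standard nonzero σ-finite measure space, each admitting a finite measure measurable
fundamental domain. -/
structure MECoupling (G H : Type) [Group G] [Group H] : Type 1 where
  (Ω : Type)
  [mΩ : MeasurableSpace Ω]
  (m : Measure Ω)
  (aG : G → Ω → Ω)
  (aH : H → Ω → Ω)
  (standardBorel : StandardBorelSpace Ω)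
  (sigmaFinite : SigmaFinite m)
  (nonzero : m ≠ 0)
  (mpG : IsMpAction aG m)
  (mpH : IsMpAction aH m)
  (comm : ∀ (g : G) (h : H) (x : Ω), aG g (aH h x) = aH h (aG g x))
  (FG : Set Ω)
  (FH : Set Ω)
  (fundG : IsFundDomain aG FG m)
  (fundH : IsFundDomain aH FH m)
  (finG : m FG < ⊤)
  (finH : m FH < ⊤)

/-- `G` and `H` are measure equivalent. -/
def MeasureEquivalent (G H : Type) [Group G] [Group H] : Prop :=
  Nonempty (MECoupling G H)

/-- `G` and `H` admit a measure equivalence coupling of coupling index `α`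
(the ratio of the measures of the `H`- and `G`-fundamental domains). -/
def MeasureEquivalentWithIndex (G H : Type) [Group G] [Group H] (α : ℝ≥0∞) : Prop :=
  ∃ c : MECoupling G H, c.m c.FH = α * c.m c.FG



variable {X : Type}

/-! ### Countable Borel equivalence relations and measurable splittings -/

/-- `R` is a p.m.p. countable Borel equivalence relation on `(X, μ)`: every Borel bijection
between Borel subsets whose graph is contained in `R` preserves `μ`. -/
def IsPmpCBER [MeasurableSpace X] (R : X → X → Prop) (μ : Measure X) : Prop :=
  Equivalence R ∧ MeasurableSet {p : X × X | R p.1 p.2} ∧ (∀ x, {y | R x y}.Countable) ∧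
    ∀ (f : X → X) (A B : Set X), Measurable f → MeasurableSet A → MeasurableSet B →
      Set.BijOn f A B → (∀ x ∈ A, R x (f x)) →
      ∀ C : Set X, MeasurableSet C → C ⊆ B → μ (A ∩ f ⁻¹' C) = μ C

/-- The relation `R` is ergodic with respect to `μ`. -/
def IsErgodicRel [MeasurableSpace X] (R : X → X → Prop) (μ : Measure X) : Prop :=
  ∀ A : Set X, MeasurableSet A → (∀ x y, R x y → (x ∈ A ↔ y ∈ A)) → μ A = 0 ∨ μ Aᶜ = 0

/-- The subrelations `R₀` and `R₁` are freely independent: there is no reduced cycle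
alternating between nontrivial `R₀`-steps and `R₁`-steps. -/
def FreelyIndepRel (R₀ R₁ : X → X → Prop) : Prop :=
  ¬ ∃ (n : ℕ) (i : ℕ → Fin 2) (x : ℕ → X),
      2 ≤ n ∧ x n = x 0 ∧ (∀ j < n, x j ≠ x (j + 1)) ∧
      (∀ j, j + 1 < n → i j ≠ i (j + 1)) ∧
      (∀ j < n, if i j = 0 then R₀ (x j) (x (j + 1)) else R₁ (x j) (x (j + 1)))

/-- `R` splits as the free product `R = R₀ ∗ R₁`: `R₀` and `R₁` are freely independent
subequivalence relations generating `R`. -/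
def SplitsAs (R R₀ R₁ : X → X → Prop) : Prop :=
  Equivalence R₀ ∧ Equivalence R₁ ∧ (∀ x y, R₀ x y → R x y) ∧ (∀ x y, R₁ x y → R x y) ∧
    FreelyIndepRel R₀ R₁ ∧
    ∀ x y, R x y ↔ Relation.EqvGen (fun u v => R₀ u v ∨ R₁ u v) x y

/-- The splitting `R = R₀ ∗ R₁` is inessential on the (invariant) set `C`. -/
def InessentialOn [MeasurableSpace X] (R R₀ R₁ : X → X → Prop) (C : Set X) : Prop :=
  ∃ X₀ X₁ : Set X, MeasurableSet X₀ ∧ MeasurableSet X₁ ∧ X₀ ∪ X₁ = C ∧ Disjoint X₀ X₁ ∧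
    (∀ x ∈ C, ∀ y ∈ C, R x y → (x ∈ X₀ ↔ y ∈ X₀)) ∧
    ∃ U₀ U₁ : Set X, MeasurableSet U₀ ∧ MeasurableSet U₁ ∧ U₀ ⊆ X₀ ∧ U₁ ⊆ X₁ ∧
      (∀ x ∈ X₀, ∃ y ∈ U₀, R x y) ∧ (∀ x ∈ X₁, ∃ y ∈ U₁, R x y) ∧
      (∀ x ∈ U₀, ∀ y ∈ U₀, (R x y ↔ R₀ x y)) ∧ (∀ x ∈ U₁, ∀ y ∈ U₁, (R x y ↔ R₁ x y))

/-- The splitting is `μ`-essential: there is no `R`-invariant `μ`-conull Borel set on which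
it is inessential. -/
def MuEssential [MeasurableSpace X] (μ : Measure X) (R R₀ R₁ : X → X → Prop) : Prop :=
  ¬ ∃ C : Set X, MeasurableSet C ∧ μ Cᶜ = 0 ∧ (∀ x y, R x y → (x ∈ C ↔ y ∈ C)) ∧
      InessentialOn R R₀ R₁ C

/-- `R = R₀ ∗ R₁` is a `μ`-essential splitting. -/
def EssentialSplitting [MeasurableSpace X] (μ : Measure X) (R R₀ R₁ : X → X → Prop) : Prop :=
  SplitsAs R R₀ R₁ ∧ MuEssential μ R R₀ R₁

/-- The orbit equivalence relation of an action given by `a`. -/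
def orbitRelOf {G : Type} (a : G → X → X) : X → X → Prop := fun x y => ∃ g : G, a g x = y

/-- The restriction of the relation `R` to the set `C` (extended by equality off `C`). -/
def restrictRel (R : X → X → Prop) (C : Set X) : X → X → Prop :=
  fun x y => x = y ∨ (R x y ∧ x ∈ C ∧ y ∈ C)

/-- `R` is hyperfinite: an increasing union of Borel equivalence relations with finite
classes. -/
def IsHyperfinite [MeasurableSpace X] (R : X → X → Prop) : Prop :=
  ∃ S : ℕ → X → X → Prop,
    (∀ n, Equivalence (S n)) ∧ (∀ n, MeasurableSet {p : X × X | S n p.1 p.2}) ∧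
    (∀ n x y, S n x y → S (n + 1) x y) ∧ (∀ n x, {y | S n x y}.Finite) ∧
    ∀ x y, R x y ↔ ∃ n, S n x y

/-- `R` is `μ`-amenable: off a `μ`-null set it is hyperfinite. -/
def MuAmenableRel [MeasurableSpace X] (R : X → X → Prop) (μ : Measure X) : Prop :=
  ∃ C : Set X, MeasurableSet C ∧ μ Cᶜ = 0 ∧ IsHyperfinite (restrictRel R C)

/-- `R` is `μ`-nowhere amenable: there is no positive measure Borel set on which the
restriction of `R` is amenable. -/
def MuNowhereAmenable [MeasurableSpace X] (R : X → X → Prop) (μ : Measure X) : Prop :=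
  ¬ ∃ A : Set X, MeasurableSet A ∧ 0 < μ A ∧
      ∃ C : Set X, MeasurableSet C ∧ C ⊆ A ∧ μ (A \ C) = 0 ∧
        IsHyperfinite (restrictRel R C)

/-- The symmetric irreflexive graph `E` has no cycles. -/
def HasNoGraphCycles (E : X → X → Prop) : Prop :=
  ¬ ∃ (n : ℕ) (x : ℕ → X), 3 ≤ n ∧ (∀ j < n, E (x j) (x (j + 1))) ∧ x n = x 0 ∧
      ∀ j < n, ∀ k < n, j ≠ k → x j ≠ x k

/-- `R` is treeable: it is generated by a Borel graphing whose connected components are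
acyclic. -/
def IsTreeable [MeasurableSpace X] (R : X → X → Prop) : Prop :=
  ∃ E : X → X → Prop,
    MeasurableSet {p : X × X | E p.1 p.2} ∧ (∀ x y, E x y → E y x) ∧ (∀ x, ¬ E x x) ∧
    (∀ x y, E x y → R x y) ∧ (∀ x y, R x y ↔ Relation.EqvGen E x y) ∧ HasNoGraphCycles E


/-- `Γ` admits an essential measurable splitting: some free p.m.p. action of `Γ` on a
standard probability space has orbit equivalence relation admitting a `μ`-essential
splitting (into Borel subequivalence relations). -/
def AdmitsEssentialMeasurableSplitting (Γ : Type) [Group Γ] : Prop :=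
  ∃ S : PmpSystem Γ, S.Free ∧
    ∃ R₀ R₁ : S.X → S.X → Prop,
      letI := S.mX
      MeasurableSet {p : S.X × S.X | R₀ p.1 p.2} ∧
      MeasurableSet {p : S.X × S.X | R₁ p.1 p.2} ∧
      EssentialSplitting S.μ (orbitRelOf S.act) R₀ R₁


variable {X Y Z : Type}

/-! ### Cocycles and superrigidity -/

/-- A measurable `L`-valued cocycle over the action `a`. -/
def IsCocycle {G L : Type} [Group G] [MeasurableSpace X] [Group L] [MeasurableSpace L]
    (a : G → X → X) (μ : Measure X) (c : G → X → L) : Prop :=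
  (∀ g : G, Measurable (c g)) ∧
    ∀ g h : G, ∀ᵐ x ∂μ, c (g * h) x = c g (a h x) * c h x

/-- Two cocycles are cohomologous. -/
def Cohomologous {G L : Type} [Group G] [MeasurableSpace X] [Group L] [MeasurableSpace L]
    (a : G → X → X) (μ : Measure X) (c₀ c₁ : G → X → L) : Prop :=
  ∃ f : X → L, Measurable f ∧ ∀ g : G, ∀ᵐ x ∂μ, f (a g x) * c₀ g x * (f x)⁻¹ = c₁ g x

/-- The action `a` is `L`-cocycle superrigid: every measurable `L`-valued cocycle is
cohomologous to a group homomorphism. -/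
def IsCocycleSuperrigid {G : Type} [Group G] [MeasurableSpace X]
    (L : Type) [Group L] [MeasurableSpace L] (a : G → X → X) (μ : Measure X) : Prop :=
  ∀ c : G → X → L, IsCocycle a μ c →
    ∃ ρ : G →* L, Cohomologous a μ c fun g _ => ρ g

/-- The action is `𝒢_ctble`-cocycle superrigid: `L`-cocycle superrigid for every countable
discrete group `L`. -/
def IsGctbleCocycleSuperrigid {G : Type} [Group G] [MeasurableSpace X]
    (a : G → X → X) (μ : Measure X) : Prop :=
  ∀ (L : Type) [Group L] [MeasurableSpace L] [MeasurableSingletonClass L],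
    Countable L → IsCocycleSuperrigid L a μ

/-- The action is strongly ergodic. -/
def IsStronglyErgodic {G : Type} [Group G] [MeasurableSpace X]
    (a : G → X → X) (μ : Measure X) : Prop :=
  ∀ A : ℕ → Set X, (∀ n, MeasurableSet (A n)) →
    (∀ g : G, Tendsto (fun n => μ (symmDiff (a g '' A n) (A n))) atTop (nhds 0)) →
    Tendsto (fun n => μ (A n) * μ (A n)ᶜ) atTop (nhds 0)

/-- Soficity of a group. -/
def IsSofic (G : Type) [Group G] : Prop :=
  ∀ (F : Finset G) (ε : ℝ), 0 < ε →
    ∃ (n : ℕ) (σ : G → Equiv.Perm (Fin n)),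
      (∀ g ∈ F, ∀ h ∈ F,
        (1 - ε) * n ≤ ((Finset.univ.filter fun i => σ (g * h) i = σ g (σ h i)).card : ℝ)) ∧
      ∀ g ∈ F, g ≠ 1 →
        (1 - ε) * n ≤ ((Finset.univ.filter fun i => σ g i ≠ i).card : ℝ)

/-! ### Internal free products -/

/-- `Γ` is the internal free product of its subgroups `Λ` and `H`: together they generate
`Γ` and no alternating product of nonidentity elements is the identity. -/
def IsInternalFreeProduct {Γ : Type} [Group Γ] (Λ H : Subgroup Γ) : Prop :=
  Λ ⊔ H = ⊤ ∧
    ∀ (n : ℕ) (w : Fin (n + 1) → Γ) (c : Fin (n + 1) → Bool),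
      (∀ i, w i ≠ 1) →
      (∀ i, if c i then w i ∈ Λ else w i ∈ H) →
      (∀ i : Fin n, c i.castSucc ≠ c i.succ) →
      (List.ofFn w).prod ≠ 1





/-! ### Cofinitely equivariant maps -/

/-- `x ∼_B y`: the functions differ in finitely many coordinates, and wherever they differ
the values lie in the same `B`-orbit. -/
def simRel (β : B → Y → Y) (x y : Γ → Y) : Prop :=
  {γ : Γ | x γ ≠ y γ}.Finite ∧ ∀ γ : Γ, x γ ≠ y γ → ∃ l : B, β l (x γ) = y γ

/-- `φ` is cofinitely equivariant with respect to the given actions of `B` and `C`. -/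
def CofinitelyEquivariant [Group Γ] [MeasurableSpace Y] (β : B → Y → Y) (χ : C → Z → Z)
    (νΓ : Measure (Γ → Y)) (φ : (Γ → Y) → (Γ → Z)) : Prop :=
  ∀ᵐ y ∂νΓ, ∀ x : Γ → Y, simRel β x y → ∀ γ : Γ,
    simRel χ (φ (shiftS γ x)) (shiftS γ (φ y))

/-- `φ` (with a.e. inverse `ψ`) is a bi-cofinitely equivariant measure space isomorphism. -/
def BiCofinitelyEquivariant [Group Γ] [MeasurableSpace Y] [MeasurableSpace Z]
    (β : B → Y → Y) (χ : C → Z → Z) (νΓ : Measure (Γ → Y)) (ηΓ : Measure (Γ → Z))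
    (φ : (Γ → Y) → (Γ → Z)) (ψ : (Γ → Z) → (Γ → Y)) : Prop :=
  MeasurePreserving φ νΓ ηΓ ∧ Measurable ψ ∧
    (∀ᵐ y ∂νΓ, ψ (φ y) = y) ∧ (∀ᵐ z ∂ηΓ, φ (ψ z) = z) ∧
    CofinitelyEquivariant β χ νΓ φ ∧ CofinitelyEquivariant χ β ηΓ ψ

/-! ### Stable orbit equivalence -/

/-- The actions `a` and `b` are stably orbit equivalent. -/
def StablyOrbitEquivalent {G H : Type} [MeasurableSpace X] [MeasurableSpace Y]
    (a : G → X → X) (b : H → Y → Y) (μ : Measure X) (ν : Measure Y) : Prop :=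
  ∃ (X₀ : Set X) (Y₀ : Set Y) (φ : X → Y),
    MeasurableSet X₀ ∧ MeasurableSet Y₀ ∧ 0 < μ X₀ ∧ 0 < ν Y₀ ∧
    (∀ᵐ x ∂μ.restrict X₀, φ x ∈ Y₀) ∧
    MeasurePreserving φ ((μ X₀)⁻¹ • μ.restrict X₀) ((ν Y₀)⁻¹ • ν.restrict Y₀) ∧
    (∃ ψ : Y → X, Measurable ψ ∧ (∀ᵐ x ∂μ.restrict X₀, ψ (φ x) = x) ∧
      (∀ᵐ y ∂ν.restrict Y₀, φ (ψ y) = y)) ∧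
    ∀ᵐ x ∂μ.restrict X₀,
      (∀ g : G, a g x ∈ X₀ → ∃ h : H, φ (a g x) = b h (φ x)) ∧
      (∀ h : H, b h (φ x) ∈ Y₀ → ∃ g : G, a g x ∈ X₀ ∧ φ (a g x) = b h (φ x))



/-! ### Auxiliary lemmas for Statement 11 -/

section Aux
set_option linter.unusedSectionVars false

open MeasurableSpace

variable {ι κ W : Type} [MeasurableSpace W]

/-- Cylinder sets. -/
def cylSet (ι W : Type) [MeasurableSpace W] : Set (Set (ι → W)) :=
  {T | ∃ (t : Finset ι) (A : ι → Set W), (∀ i, MeasurableSet (A i)) ∧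
    T = {x : ι → W | ∀ i ∈ t, x i ∈ A i}}

lemma measurableSet_cylBase (t : Finset ι) (A : ι → Set W) (hA : ∀ i, MeasurableSet (A i)) :
    MeasurableSet {x : ι → W | ∀ i ∈ t, x i ∈ A i} := by
  have h : {x : ι → W | ∀ i ∈ t, x i ∈ A i} = ⋂ i ∈ t, (fun x : ι → W => x i) ⁻¹' A i := by
    ext x; simp
  rw [h]
  exact Finset.measurableSet_biInter t fun i _ => (measurable_pi_apply i) (hA i)

lemma cyl_inter_eq (t t' : Finset ι) (A A' : ι → Set W) [DecidableEq ι] :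
    {x : ι → W | ∀ i ∈ t, x i ∈ A i} ∩ {x | ∀ i ∈ t', x i ∈ A' i} =
      {x | ∀ i ∈ t ∪ t', x i ∈
        (if i ∈ t then A i else univ) ∩ (if i ∈ t' then A' i else univ)} := by
  ext x
  simp only [Set.mem_inter_iff, Set.mem_setOf_eq, Finset.mem_union]
  constructor
  · rintro ⟨h1, h2⟩ i _
    constructor
    · split_ifs with h
      · exact h1 i h
      · trivial
    · split_ifs with h
      · exact h2 i h
      · trivial
  · intro h
    constructor
    · intro i hi
      have := (h i (Or.inl hi)).1
      rwa [if_pos hi] at this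
    · intro i hi
      have := (h i (Or.inr hi)).2
      rwa [if_pos hi] at this

lemma isPiSystem_cylSet : IsPiSystem (cylSet ι W) := by
  classical
  rintro T ⟨t, A, hA, rfl⟩ T' ⟨t', A', hA', rfl⟩ -
  refine ⟨t ∪ t', fun i => (if i ∈ t then A i else univ) ∩ (if i ∈ t' then A' i else univ),
    fun i => ?_, (cyl_inter_eq t t' A A').symm ▸ cyl_inter_eq t t' A A'⟩
  · refine MeasurableSet.inter ?_ ?_ <;> · split_ifs <;> simp [hA _, hA' _]

lemma generateFrom_cylSet :
    (MeasurableSpace.pi : MeasurableSpace (ι → W)) = .generateFrom (cylSet ι W) := by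
  classical
  apply le_antisymm
  · rw [MeasurableSpace.pi]
    refine iSup_le fun i => ?_
    intro T hT
    obtain ⟨A, hA, rfl⟩ := hT
    refine measurableSet_generateFrom ⟨{i}, fun j => if j = i then A else univ, ?_, ?_⟩
    · intro j; dsimp only; split_ifs <;> simp [hA]
    · ext x; simp
  · refine MeasurableSpace.generateFrom_le ?_
    rintro T ⟨t, A, hA, rfl⟩
    exact measurableSet_cylBase t A hA

lemma isProductMeasure_unique {ν : Measure W} {m₁ m₂ : Measure (ι → W)}
    (h₁ : IsProductMeasure ν m₁) (h₂ : IsProductMeasure ν m₂) : m₁ = m₂ := by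
  haveI := h₁.1
  refine ext_of_generate_finite (cylSet ι W) generateFrom_cylSet isPiSystem_cylSet ?_ ?_
  · rintro T ⟨t, A, hA, rfl⟩
    rw [h₁.2 t A hA, h₂.2 t A hA]
  · rw [h₁.1.measure_univ, h₂.1.measure_univ]

lemma exists_cyl_reindex (ν : Measure W) {e : κ → ι} (t : Finset κ) (he : Set.InjOn e ↑t)
    (A : κ → Set W) (hA : ∀ k, MeasurableSet (A k)) :
    ∃ (t' : Finset ι) (A' : ι → Set W), (∀ i, MeasurableSet (A' i)) ∧
      {x : ι → W | ∀ k ∈ t, x (e k) ∈ A k} = {x | ∀ i ∈ t', x i ∈ A' i} ∧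
      (∏ i ∈ t', ν (A' i) = ∏ k ∈ t, ν (A k)) ∧
      (∀ i ∈ t', ∃ k ∈ t, e k = i) := by
  classical
  have hkey : ∀ k ∈ t, (⋂ k' ∈ t.filter (fun k' => e k' = e k), A k') = A k := by
    intro k hk
    have hfil : t.filter (fun k' => e k' = e k) = {k} := by
      apply Finset.ext; intro k'
      simp only [Finset.mem_filter, Finset.mem_singleton]
      exact ⟨fun h => he h.1 hk h.2, fun h => by subst h; exact ⟨hk, rfl⟩⟩
    rw [hfil]; simp
  refine ⟨t.image e, fun i => ⋂ k ∈ t.filter (fun k => e k = i), A k, ?_, ?_, ?_, ?_⟩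
  · intro i
    exact Finset.measurableSet_biInter _ fun k _ => hA k
  · ext x
    simp only [Set.mem_setOf_eq, Finset.mem_image]
    constructor
    · rintro h i ⟨k, hk, rfl⟩
      rw [hkey k hk]; exact h k hk
    · intro h k hk
      have := h (e k) ⟨k, hk, rfl⟩
      rwa [hkey k hk] at this
  · rw [Finset.prod_image ?_]
    · refine Finset.prod_congr rfl fun k hk => ?_
      show ν (⋂ k' ∈ t.filter (fun k' => e k' = e k), A k') = ν (A k)
      rw [hkey k hk]
    · intro a ha b hb hab; exact he ha hb hab
  · intro i hi
    simp only [Finset.mem_image] at hi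
    obtain ⟨k, hk, rfl⟩ := hi
    exact ⟨k, hk, rfl⟩

end Aux

section Block
set_option linter.unusedSectionVars false

variable {Γ W : Type} [Group Γ] (Λ : Subgroup Γ) [MeasurableSpace W]

/-- The `Λ`-block of `x` at `s`. -/
def blockMap (s : Γ) (x : Γ → W) : ↥Λ → W := fun lam => x (s * ↑lam)

lemma measurable_blockMap (s : Γ) : Measurable (blockMap Λ s : (Γ → W) → ↥Λ → W) :=
  measurable_pi_lambda _ fun lam => measurable_pi_apply _

lemma blockInj (s : Γ) : Function.Injective (fun lam : ↥Λ => s * (lam : Γ)) := by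
  intro a b h
  exact Subtype.ext (mul_left_cancel h)

lemma isProductMeasure_map_comp {ι κ : Type} [MeasurableSpace W] {ν : Measure W}
    {m : Measure (ι → W)}
    (hm : IsProductMeasure ν m) {e : κ → ι} (he : Function.Injective e) :
    IsProductMeasure ν (m.map (fun x => x ∘ e)) := by
  have hmeas : Measurable fun x : ι → W => x ∘ e :=
    measurable_pi_lambda _ fun k => measurable_pi_apply (e k)
  haveI := hm.1
  constructor
  · exact Measure.isProbabilityMeasure_map hmeas.aemeasurable
  · intro t A hA
    obtain ⟨t', A', hA', hset, hprod, -⟩ := exists_cyl_reindex ν t he.injOn A hA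
    rw [Measure.map_apply hmeas (measurableSet_cylBase t A hA)]
    have h0 : (fun x : ι → W => x ∘ e) ⁻¹' {u | ∀ k ∈ t, u k ∈ A k}
        = {x : ι → W | ∀ k ∈ t, x (e k) ∈ A k} := rfl
    rw [h0, hset, hm.2 t' A' hA', hprod]

lemma map_blockMap_eq {ν : Measure W} {m : Measure (Γ → W)} (hm : IsProductMeasure ν m)
    {mΛ : Measure (↥Λ → W)} (hmΛ : IsProductMeasure ν mΛ) (s : Γ) :
    m.map (blockMap Λ s) = mΛ := by
  have h : blockMap Λ s = fun x : Γ → W => x ∘ (fun lam : ↥Λ => s * ↑lam) := rfl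
  rw [h]
  exact isProductMeasure_unique (isProductMeasure_map_comp hm (blockInj Λ s)) hmΛ

lemma measurableSet_blockEvent (F : Finset Γ) (E : Γ → Set (↥Λ → W))
    (hE : ∀ s, MeasurableSet (E s)) :
    MeasurableSet {x : Γ → W | ∀ s ∈ F, blockMap Λ s x ∈ E s} := by
  have h : {x : Γ → W | ∀ s ∈ F, blockMap Λ s x ∈ E s}
      = ⋂ s ∈ F, blockMap Λ s ⁻¹' E s := by ext x; simp
  rw [h]
  exact Finset.measurableSet_biInter F fun s _ => (measurable_blockMap Λ s) (hE s)

lemma blockIndep {ν : Measure W} [IsProbabilityMeasure ν] {m : Measure (Γ → W)}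
    (hm : IsProductMeasure ν m) {mΛ : Measure (↥Λ → W)} (hmΛ : IsProductMeasure ν mΛ)
    (RS : Set Γ) (r : Γ → Γ) (hr : ∀ s ∈ RS, ∀ lam : ↥Λ, r (s * ↑lam) = s)
    (E : Γ → Set (↥Λ → W)) (hE : ∀ s, MeasurableSet (E s)) (F : Finset Γ) :
    ↑F ⊆ RS → ∀ (t : Finset Γ) (A : Γ → Set W), (∀ γ, MeasurableSet (A γ)) →
    (∀ γ ∈ t, r γ ∉ F) →
    m ({x | ∀ s ∈ F, blockMap Λ s x ∈ E s} ∩ {x | ∀ γ ∈ t, x γ ∈ A γ}) =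
      (∏ s ∈ F, mΛ (E s)) * ∏ γ ∈ t, ν (A γ) := by
  classical
  haveI := hm.1
  haveI := hmΛ.1
  induction F using Finset.induction_on with
  | empty =>
    intro _ t A hA _
    have h1 : {x : Γ → W | ∀ s ∈ (∅ : Finset Γ), blockMap Λ s x ∈ E s} = Set.univ := by
      ext x; simp
    rw [h1, Set.univ_inter, hm.2 t A hA, Finset.prod_empty, one_mul]
  | @insert s₀ F' hs₀ ih =>
    intro hF t A hA ht
    have hs₀RS : s₀ ∈ RS := hF (Finset.mem_insert_self s₀ F')
    have hF' : ↑F' ⊆ RS := (Finset.coe_subset.mpr (Finset.subset_insert s₀ F')).trans hF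
    set Rest := {x : Γ → W | ∀ s ∈ F', blockMap Λ s x ∈ E s} ∩ {x | ∀ γ ∈ t, x γ ∈ A γ}
      with hRest
    have hRestMeas : MeasurableSet Rest :=
      (measurableSet_blockEvent Λ F' E hE).inter (measurableSet_cylBase t A hA)
    set μ₁ := (m.restrict Rest).map (blockMap Λ s₀) with hμ₁
    set C₁ := ∏ s ∈ F', mΛ (E s) with hC₁
    set C₂ := ∏ γ ∈ t, ν (A γ) with hC₂
    have hμ₁app : ∀ (T : Set (↥Λ → W)), MeasurableSet T →
        μ₁ T = m (blockMap Λ s₀ ⁻¹' T ∩ Rest) := by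
      intro T hT
      rw [hμ₁, Measure.map_apply (measurable_blockMap Λ s₀) hT,
        Measure.restrict_apply ((measurable_blockMap Λ s₀) hT)]
    have hcyl : ∀ (u : Finset ↥Λ) (D : ↥Λ → Set W), (∀ lam, MeasurableSet (D lam)) →
        μ₁ {w | ∀ lam ∈ u, w lam ∈ D lam}
          = mΛ {w | ∀ lam ∈ u, w lam ∈ D lam} * (C₁ * C₂) := by
      intro u D hD
      obtain ⟨t', A', hA', hset, hprod, hmem'⟩ :=
        exists_cyl_reindex ν u (blockInj Λ s₀).injOn D hD
      have hpre : blockMap Λ s₀ ⁻¹' {w | ∀ lam ∈ u, w lam ∈ D lam}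
          = {x : Γ → W | ∀ i ∈ t', x i ∈ A' i} := by
        have h0 : blockMap Λ s₀ ⁻¹' {w | ∀ lam ∈ u, w lam ∈ D lam}
            = {x : Γ → W | ∀ lam ∈ u, x (s₀ * ↑lam) ∈ D lam} := rfl
        rw [h0, hset]
      rw [hμ₁app _ (measurableSet_cylBase u D hD), hpre]
      have hre : {x : Γ → W | ∀ i ∈ t', x i ∈ A' i} ∩ Rest
          = {x | ∀ s ∈ F', blockMap Λ s x ∈ E s}
            ∩ ({x | ∀ γ ∈ t, x γ ∈ A γ} ∩ {x | ∀ i ∈ t', x i ∈ A' i}) := by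
        rw [hRest]; ext x; simp only [Set.mem_inter_iff, Set.mem_setOf_eq]; tauto
      rw [hre, cyl_inter_eq t t' A A']
      set A'' := fun i => (if i ∈ t then A i else Set.univ) ∩ (if i ∈ t' then A' i else Set.univ)
        with hA''def
      have hA'' : ∀ γ, MeasurableSet (A'' γ) := by
        intro γ; rw [hA''def]
        refine MeasurableSet.inter ?_ ?_ <;> · split_ifs <;> simp [hA _, hA' _]
      have ht'' : ∀ γ ∈ t ∪ t', r γ ∉ F' := by
        intro γ hγ
        rcases Finset.mem_union.mp hγ with h | h
        · exact fun hmem => ht γ h (Finset.mem_insert_of_mem hmem)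
        · obtain ⟨lam, -, rfl⟩ := hmem' γ h
          rw [hr s₀ hs₀RS lam]
          exact hs₀
      rw [ih hF' (t ∪ t') A'' hA'' ht'']
      have hdisj2 : Disjoint t t' := by
        rw [Finset.disjoint_left]
        intro γ hγt hγt'
        obtain ⟨lam, -, rfl⟩ := hmem' γ hγt'
        exact ht _ hγt (by rw [hr s₀ hs₀RS lam]; exact Finset.mem_insert_self s₀ F')
      rw [Finset.prod_union hdisj2]
      have h1 : ∏ γ ∈ t, ν (A'' γ) = C₂ := by
        refine Finset.prod_congr rfl fun γ hγ => ?_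
        have hγ' : γ ∉ t' := Finset.disjoint_left.mp hdisj2 hγ
        rw [hA''def]
        simp only [if_pos hγ, if_neg hγ', Set.inter_univ]
      have h2 : ∏ γ ∈ t', ν (A'' γ) = mΛ {w | ∀ lam ∈ u, w lam ∈ D lam} := by
        have h3 : ∏ γ ∈ t', ν (A'' γ) = ∏ γ ∈ t', ν (A' γ) := by
          refine Finset.prod_congr rfl fun γ hγ => ?_
          have hγ' : γ ∉ t := Finset.disjoint_right.mp hdisj2 hγ
          rw [hA''def]
          simp only [if_pos hγ, if_neg hγ', Set.univ_inter]
        rw [h3, hprod, hmΛ.2 u D hD]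
      rw [h1, h2]
      ring
    have hμ₂cyl : ∀ (T : Set (↥Λ → W)), ((C₁ * C₂) • mΛ) T = mΛ T * (C₁ * C₂) := by
      intro T
      rw [Measure.smul_apply, smul_eq_mul, mul_comm]
    have hC₁top : C₁ ≤ 1 := by
      rw [hC₁]
      exact Finset.prod_le_one (fun _ _ => zero_le) fun s _ => prob_le_one
    have hC₂top : C₂ ≤ 1 := by
      rw [hC₂]
      exact Finset.prod_le_one (fun _ _ => zero_le) fun s _ => prob_le_one
    haveI : IsFiniteMeasure μ₁ := by
      constructor
      rw [hμ₁app Set.univ MeasurableSet.univ, Set.preimage_univ, Set.univ_inter]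
      exact measure_lt_top m Rest
    haveI : IsFiniteMeasure ((C₁ * C₂) • mΛ) := by
      constructor
      rw [hμ₂cyl, measure_univ, one_mul]
      exact lt_of_le_of_lt (mul_le_one' hC₁top hC₂top) ENNReal.one_lt_top
    have hμeq : μ₁ = (C₁ * C₂) • mΛ := by
      refine ext_of_generate_finite (cylSet ↥Λ W) generateFrom_cylSet isPiSystem_cylSet ?_ ?_
      · rintro T ⟨u, D, hD, rfl⟩
        rw [hcyl u D hD, hμ₂cyl]
      · have huniv : (Set.univ : Set (↥Λ → W)) = {w | ∀ lam ∈ (∅ : Finset ↥Λ), w lam ∈ Set.univ} := by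
          ext w; simp
        rw [huniv, hcyl ∅ (fun _ => Set.univ) (fun _ => MeasurableSet.univ), hμ₂cyl]
    have hfin : {x : Γ → W | ∀ s ∈ insert s₀ F', blockMap Λ s x ∈ E s} ∩ {x | ∀ γ ∈ t, x γ ∈ A γ}
        = blockMap Λ s₀ ⁻¹' E s₀ ∩ Rest := by
      rw [hRest]
      ext x
      simp only [Set.mem_inter_iff, Set.mem_preimage, Set.mem_setOf_eq, Finset.mem_insert]
      constructor
      · rintro ⟨h1, h2⟩
        exact ⟨h1 s₀ (Or.inl rfl), fun s hs => h1 s (Or.inr hs), h2⟩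
      · rintro ⟨h0, h1, h2⟩
        exact ⟨fun s hs => hs.elim (fun h => by rw [h]; exact h0) (h1 s), h2⟩
    rw [hfin, ← hμ₁app (E s₀) (hE s₀), hμeq, hμ₂cyl, Finset.prod_insert hs₀]
    ring

end Block

section Equiv
set_option linter.unusedSectionVars false

variable {Γ B C Y Z : Type} [Group Γ] (Λ : Subgroup Γ)

lemma simRel_blockMap (β : B → Y → Y) {x' x : Γ → Y} (h : simRel β x' x) (s : Γ) :
    simRel β (blockMap Λ s x') (blockMap Λ s x) := by
  constructor
  · have hsub : {lam : ↥Λ | blockMap Λ s x' lam ≠ blockMap Λ s x lam}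
        ⊆ (fun lam : ↥Λ => s * ↑lam) ⁻¹' {γ | x' γ ≠ x γ} := fun lam hlam => hlam
    exact (h.1.preimage (blockInj Λ s).injOn).subset hsub
  · intro lam hlam
    exact h.2 _ hlam

lemma shiftS_inv_apply {α : Type} (l : ↥Λ) (w : ↥Λ → α) (lam : ↥Λ) :
    shiftS l⁻¹ w lam = w (l * lam) := by
  show w ((l⁻¹)⁻¹ • lam) = _
  rw [inv_inv, smul_eq_mul]

lemma shiftS_one_inv {α : Type} (w : ↥Λ → α) : shiftS ((1 : ↥Λ))⁻¹ w = w := by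
  funext lam
  rw [shiftS_inv_apply, one_mul]

lemma equivCore (S : Set Γ) (β : B → Y → Y) (χ : C → Z → Z) (r : Γ → Γ) (q : Γ → ↥Λ)
    (hrS : ∀ γ, r γ ∈ S) (hfac : ∀ γ, r γ * ↑(q γ) = γ)
    (hrmul : ∀ (γ : Γ) (lam : ↥Λ), r (γ * ↑lam) = r γ)
    (hqmul : ∀ (γ : Γ) (lam : ↥Λ), q (γ * ↑lam) = q γ * lam)
    (hrfix : ∀ s ∈ S, r s = s)
    (hSfin : ∀ γ : Γ, (S \ (γ * ·) '' S).Finite)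
    (φΛ : (↥Λ → Y) → (↥Λ → Z)) (x : Γ → Y)
    (hx : ∀ s ∈ S, ∀ u : ↥Λ → Y, simRel β u (blockMap Λ s x) →
      ∀ lam : ↥Λ, simRel χ (φΛ (shiftS lam u)) (shiftS lam (φΛ (blockMap Λ s x))))
    (x' : Γ → Y) (hxx' : simRel β x' x) (γ : Γ) :
    simRel χ (fun δ => φΛ (blockMap Λ (r δ) (shiftS γ x')) (q δ))
      (shiftS γ (fun δ => φΛ (blockMap Λ (r δ) x) (q δ))) := by
  classical
  have hq1 : ∀ s ∈ S, q s = 1 := by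
    intro s hs
    have h := hfac s
    rw [hrfix s hs] at h
    have h2 : (↑(q s) : Γ) = 1 := by
      have h3 : s * ↑(q s) = s * 1 := by rw [h, mul_one]
      exact mul_left_cancel h3
    exact_mod_cast h2
  have hId1 : ∀ s : Γ, blockMap Λ s (shiftS γ x')
      = shiftS (q (γ⁻¹ * s))⁻¹ (blockMap Λ (r (γ⁻¹ * s)) x') := by
    intro s
    funext lam
    rw [shiftS_inv_apply]
    show x' (γ⁻¹ • (s * ↑lam)) = x' (r (γ⁻¹ * s) * ↑(q (γ⁻¹ * s) * lam))
    rw [smul_eq_mul]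
    congr 1
    push_cast
    rw [← mul_assoc, ← mul_assoc, hfac (γ⁻¹ * s)]
  have hId2 : ∀ δ : Γ, (shiftS γ (fun δ' => φΛ (blockMap Λ (r δ') x) (q δ')) : Γ → Z) δ
      = shiftS (q (γ⁻¹ * r δ))⁻¹ (φΛ (blockMap Λ (r (γ⁻¹ * r δ)) x)) (q δ) := by
    intro δ
    show φΛ (blockMap Λ (r (γ⁻¹ • δ)) x) (q (γ⁻¹ • δ)) = _
    rw [shiftS_inv_apply, smul_eq_mul]
    have hδ : γ⁻¹ * δ = (γ⁻¹ * r δ) * ↑(q δ) := by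
      conv_lhs => rw [← hfac δ]
      rw [mul_assoc]
    rw [hδ, hrmul, hqmul]
  have Hs : ∀ s : Γ, simRel χ
      (φΛ (shiftS (q (γ⁻¹ * s))⁻¹ (blockMap Λ (r (γ⁻¹ * s)) x')))
      (shiftS (q (γ⁻¹ * s))⁻¹ (φΛ (blockMap Λ (r (γ⁻¹ * s)) x))) := by
    intro s
    exact hx (r (γ⁻¹ * s)) (hrS _) _ (simRel_blockMap Λ β hxx' _) _
  have hLHS : ∀ δ : Γ, φΛ (blockMap Λ (r δ) (shiftS γ x')) (q δ)
      = φΛ (shiftS (q (γ⁻¹ * r δ))⁻¹ (blockMap Λ (r (γ⁻¹ * r δ)) x')) (q δ) := by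
    intro δ
    rw [hId1 (r δ)]
  constructor
  · -- finiteness
    have hBadfin : ({s ∈ S | q (γ⁻¹ * s) ≠ 1 ∨
        blockMap Λ (r (γ⁻¹ * s)) x' ≠ blockMap Λ (r (γ⁻¹ * s)) x} : Set Γ).Finite := by
      apply Set.Finite.subset ((hSfin γ).union (hxx'.1.image (fun d => r (γ * r d))))
      rintro s ⟨hsS, hcase⟩
      rcases hcase with h1 | h2
      · left
        refine ⟨hsS, fun hmem => h1 ?_⟩
        obtain ⟨s₁, hs₁, rfl⟩ := hmem
        have heq : γ⁻¹ * (γ * s₁) = s₁ := by group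
        rw [heq]
        exact hq1 s₁ hs₁
      · right
        have hex : ∃ lam : ↥Λ, blockMap Λ (r (γ⁻¹ * s)) x' lam
            ≠ blockMap Λ (r (γ⁻¹ * s)) x lam := by
          by_contra hcon
          push_neg at hcon
          exact h2 (funext hcon)
        obtain ⟨lam, hlam⟩ := hex
        refine ⟨r (γ⁻¹ * s) * ↑lam, hlam, ?_⟩
        show r (γ * r (r (γ⁻¹ * s) * ↑lam)) = s
        rw [hrmul, hrfix _ (hrS _)]
        have h3 : γ * r (γ⁻¹ * s) * ↑(q (γ⁻¹ * s)) = s := by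
          rw [mul_assoc, hfac, ← mul_assoc]
          simp
        calc r (γ * r (γ⁻¹ * s)) = r (γ * r (γ⁻¹ * s) * ↑(q (γ⁻¹ * s))) := (hrmul _ _).symm
          _ = r s := by rw [h3]
          _ = s := hrfix s hsS
    apply Set.Finite.subset (Set.Finite.biUnion hBadfin
      (fun s _ => ((Hs s).1.image (fun lam : ↥Λ => s * (lam : Γ)))))
    intro δ hδ
    have hδ' : φΛ (blockMap Λ (r δ) (shiftS γ x')) (q δ)
        ≠ shiftS γ (fun δ' => φΛ (blockMap Λ (r δ') x) (q δ')) δ := hδ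
    have hsS : r δ ∈ S := hrS δ
    have hbad : q (γ⁻¹ * r δ) ≠ 1 ∨
        blockMap Λ (r (γ⁻¹ * r δ)) x' ≠ blockMap Λ (r (γ⁻¹ * r δ)) x := by
      by_cases h1 : q (γ⁻¹ * r δ) = 1
      · by_cases h2 : blockMap Λ (r (γ⁻¹ * r δ)) x' = blockMap Λ (r (γ⁻¹ * r δ)) x
        · exfalso
          apply hδ'
          rw [hLHS δ, hId2 δ, h1, h2, shiftS_one_inv, shiftS_one_inv]
        · exact Or.inr h2
      · exact Or.inl h1
    have hmem : r δ ∈ {s ∈ S | q (γ⁻¹ * s) ≠ 1 ∨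
        blockMap Λ (r (γ⁻¹ * s)) x' ≠ blockMap Λ (r (γ⁻¹ * s)) x} := ⟨hsS, hbad⟩
    refine Set.mem_biUnion hmem ?_
    refine ⟨q δ, ?_, hfac δ⟩
    show φΛ (shiftS (q (γ⁻¹ * r δ))⁻¹ (blockMap Λ (r (γ⁻¹ * r δ)) x')) (q δ)
        ≠ shiftS (q (γ⁻¹ * r δ))⁻¹ (φΛ (blockMap Λ (r (γ⁻¹ * r δ)) x)) (q δ)
    intro heq
    apply hδ'
    rw [hLHS δ, hId2 δ]
    exact heq
  · -- orbit condition
    intro δ hδ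
    have hδ' : φΛ (blockMap Λ (r δ) (shiftS γ x')) (q δ)
        ≠ shiftS γ (fun δ' => φΛ (blockMap Λ (r δ') x) (q δ')) δ := hδ
    have hne : φΛ (shiftS (q (γ⁻¹ * r δ))⁻¹ (blockMap Λ (r (γ⁻¹ * r δ)) x')) (q δ)
        ≠ shiftS (q (γ⁻¹ * r δ))⁻¹ (φΛ (blockMap Λ (r (γ⁻¹ * r δ)) x)) (q δ) := by
      intro heq
      apply hδ'
      rw [hLHS δ, hId2 δ]
      exact heq
    obtain ⟨l, hl⟩ := (Hs (r δ)).2 (q δ) hne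
    refine ⟨l, ?_⟩
    show χ l (φΛ (blockMap Λ (r δ) (shiftS γ x')) (q δ))
        = shiftS γ (fun δ' => φΛ (blockMap Λ (r δ') x) (q δ')) δ
    rw [hLHS δ, hId2 δ]
    exact hl

end Equiv





/-- Lifting a bi-cofinitely `Λ`-equivariant isomorphism along a set of
left coset representatives `S` for `Λ` in `Γ` with `γS △ S` finite for all `γ`: one obtains
a bi-cofinitely `Γ`-equivariant isomorphism. -/
theorem biCofinitelyEquivariant_lift_along_coset_reps
    (Γ B C Y Z : Type) [Group Γ] [Countable Γ] [Group B] [Countable B] [Group C] [Countable C]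
    (Λ : Subgroup Γ)
    [MeasurableSpace Y] [MeasurableSpace Z] [StandardBorelSpace Y] [StandardBorelSpace Z]
    (ν : Measure Y) (η : Measure Z) [IsProbabilityMeasure ν] [IsProbabilityMeasure η]
    (b : B → Y → Y) (c : C → Z → Z) (hb : IsPmpAction b ν) (hc : IsPmpAction c η)
    (S : Set Γ)
    (hSrep : ∀ γ : Γ, ∃! s : Γ, s ∈ S ∧ γ⁻¹ * s ∈ Λ)
    (hSfin : ∀ γ : Γ, (symmDiff ((γ * ·) '' S) S).Finite)
    (νΛ : Measure (Λ → Y)) (ηΛ : Measure (Λ → Z))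
    (hνΛ : IsProductMeasure ν νΛ) (hηΛ : IsProductMeasure η ηΛ)
    (hΛiso : ∃ (φΛ : (Λ → Y) → (Λ → Z)) (ψΛ : (Λ → Z) → (Λ → Y)),
      BiCofinitelyEquivariant b c νΛ ηΛ φΛ ψΛ)
    (νΓ : Measure (Γ → Y)) (ηΓ : Measure (Γ → Z))
    (hνΓ : IsProductMeasure ν νΓ) (hηΓ : IsProductMeasure η ηΓ) :
    ∃ (φ : (Γ → Y) → (Γ → Z)) (ψ : (Γ → Z) → (Γ → Y)),
      BiCofinitelyEquivariant b c νΓ ηΓ φ ψ := by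
  classical
  obtain ⟨φΛ, ψΛ, hφmp, hψmeas, hψφ, hφψ, hφeq, hψeq⟩ := hΛiso
  haveI hνΓP := hνΓ.1
  haveI hηΓP := hηΓ.1
  haveI := hνΛ.1
  haveI := hηΛ.1
  -- coset representative functions
  have H : ∀ γ : Γ, ∃ s : Γ, (s ∈ S ∧ γ⁻¹ * s ∈ Λ) ∧
      ∀ s', s' ∈ S → γ⁻¹ * s' ∈ Λ → s' = s := by
    intro γ
    obtain ⟨s, hs, hu⟩ := hSrep γ
    exact ⟨s, hs, fun s' h1 h2 => hu s' ⟨h1, h2⟩⟩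
  choose r hrprop using H
  have hrS : ∀ γ, r γ ∈ S := fun γ => (hrprop γ).1.1
  have hrΛ : ∀ γ, γ⁻¹ * r γ ∈ Λ := fun γ => (hrprop γ).1.2
  have hruniq : ∀ γ s', s' ∈ S → γ⁻¹ * s' ∈ Λ → s' = r γ := fun γ => (hrprop γ).2
  have hqmem : ∀ γ : Γ, (r γ)⁻¹ * γ ∈ Λ := by
    intro γ
    have h := Λ.inv_mem (hrΛ γ)
    rwa [mul_inv_rev, inv_inv] at h
  set q : Γ → ↥Λ := fun γ => ⟨(r γ)⁻¹ * γ, hqmem γ⟩ with hqdef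
  have hfac : ∀ γ, r γ * ↑(q γ) = γ := by
    intro γ
    show r γ * ((r γ)⁻¹ * γ) = γ
    group
  have hrmul : ∀ (γ : Γ) (lam : ↥Λ), r (γ * ↑lam) = r γ := by
    intro γ lam
    refine (hruniq (γ * ↑lam) (r γ) (hrS γ) ?_).symm
    have h1 : (γ * ↑lam)⁻¹ * r γ = (↑lam)⁻¹ * (γ⁻¹ * r γ) := by group
    rw [h1]
    exact Λ.mul_mem (Λ.inv_mem lam.2) (hrΛ γ)
  have hrfix : ∀ s ∈ S, r s = s := by
    intro s hs
    exact (hruniq s s hs (by simpa using Λ.one_mem)).symm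
  have hqmul : ∀ (γ : Γ) (lam : ↥Λ), q (γ * ↑lam) = q γ * lam := by
    intro γ lam
    apply Subtype.ext
    show (r (γ * ↑lam))⁻¹ * (γ * ↑lam) = ((r γ)⁻¹ * γ) * ↑lam
    rw [hrmul]
    group
  have hq1 : ∀ s ∈ S, q s = 1 := by
    intro s hs
    apply Subtype.ext
    show (r s)⁻¹ * s = 1
    rw [hrfix s hs]
    group
  have hSfin' : ∀ γ : Γ, (S \ (γ * ·) '' S).Finite := by
    intro γ
    apply (hSfin γ).subset
    intro a ha
    rw [Set.mem_symmDiff]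
    exact Or.inr ⟨ha.1, ha.2⟩
  have hrblock : ∀ s ∈ S, ∀ lam : ↥Λ, r (s * ↑lam) = s := by
    intro s hs lam
    rw [hrmul, hrfix s hs]
  -- block pushforwards and a.e. transfer
  have hmapν : ∀ s : Γ, νΓ.map (blockMap Λ s) = νΛ := fun s => map_blockMap_eq Λ hνΓ hνΛ s
  have hmapη : ∀ s : Γ, ηΓ.map (blockMap Λ s) = ηΛ := fun s => map_blockMap_eq Λ hηΓ hηΛ s
  have haeν : ∀ (P : (↥Λ → Y) → Prop), (∀ᵐ w ∂νΛ, P w) →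
      ∀ s : Γ, ∀ᵐ x ∂νΓ, P (blockMap Λ s x) := by
    intro P hP s
    rw [ae_iff] at hP ⊢
    have hle : νΓ {x | ¬ P (blockMap Λ s x)} ≤ (νΓ.map (blockMap Λ s)) {w | ¬ P w} :=
      Measure.le_map_apply (measurable_blockMap Λ s).aemeasurable _
    rw [hmapν s] at hle
    exact le_antisymm (le_trans hle (le_of_eq hP)) zero_le
  have haeη : ∀ (P : (↥Λ → Z) → Prop), (∀ᵐ w ∂ηΛ, P w) →
      ∀ s : Γ, ∀ᵐ z ∂ηΓ, P (blockMap Λ s z) := by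
    intro P hP s
    rw [ae_iff] at hP ⊢
    have hle : ηΓ {z | ¬ P (blockMap Λ s z)} ≤ (ηΓ.map (blockMap Λ s)) {w | ¬ P w} :=
      Measure.le_map_apply (measurable_blockMap Λ s).aemeasurable _
    rw [hmapη s] at hle
    exact le_antisymm (le_trans hle (le_of_eq hP)) zero_le
  have hScnt : S.Countable := S.to_countable
  -- measurability
  have hφΛm : Measurable φΛ := hφmp.measurable
  have hφGm : Measurable (fun (x : Γ → Y) (δ : Γ) => φΛ (blockMap Λ (r δ) x) (q δ)) :=
    measurable_pi_lambda _ fun δ =>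
      (measurable_pi_apply (q δ)).comp (hφΛm.comp (measurable_blockMap Λ (r δ)))
  have hψGm : Measurable (fun (z : Γ → Z) (δ : Γ) => ψΛ (blockMap Λ (r δ) z) (q δ)) :=
    measurable_pi_lambda _ fun δ =>
      (measurable_pi_apply (q δ)).comp (hψmeas.comp (measurable_blockMap Λ (r δ)))
  -- blocks of the lifted maps
  have hblockφ : ∀ s ∈ S, ∀ x : Γ → Y,
      blockMap Λ s ((fun (x : Γ → Y) (δ : Γ) => φΛ (blockMap Λ (r δ) x) (q δ)) x) = φΛ (blockMap Λ s x) := by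
    intro s hs x
    funext lam
    show φΛ (blockMap Λ (r (s * ↑lam)) x) (q (s * ↑lam)) = φΛ (blockMap Λ s x) lam
    rw [hrmul, hqmul, hrfix s hs, hq1 s hs, one_mul]
  have hblockψ : ∀ s ∈ S, ∀ z : Γ → Z,
      blockMap Λ s ((fun (z : Γ → Z) (δ : Γ) => ψΛ (blockMap Λ (r δ) z) (q δ)) z) = ψΛ (blockMap Λ s z) := by
    intro s hs z
    funext lam
    show ψΛ (blockMap Λ (r (s * ↑lam)) z) (q (s * ↑lam)) = ψΛ (blockMap Λ s z) lam
    rw [hrmul, hqmul, hrfix s hs, hq1 s hs, one_mul]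
  -- a.e. inverses
  have hψφG : ∀ᵐ x ∂νΓ, (fun (z : Γ → Z) (δ : Γ) => ψΛ (blockMap Λ (r δ) z) (q δ)) ((fun (x : Γ → Y) (δ : Γ) => φΛ (blockMap Λ (r δ) x) (q δ)) x) = x := by
    have hall : ∀ᵐ x ∂νΓ, ∀ s (_ : s ∈ S), ψΛ (φΛ (blockMap Λ s x)) = blockMap Λ s x :=
      (ae_ball_iff hScnt).mpr fun s _ => haeν _ hψφ s
    filter_upwards [hall] with x hx
    funext δ
    show ψΛ (blockMap Λ (r δ) ((fun (x : Γ → Y) (δ : Γ) => φΛ (blockMap Λ (r δ) x) (q δ)) x)) (q δ) = x δ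
    rw [hblockφ (r δ) (hrS δ) x, hx (r δ) (hrS δ)]
    show x (r δ * ↑(q δ)) = x δ
    rw [hfac δ]
  have hφψG : ∀ᵐ z ∂ηΓ, (fun (x : Γ → Y) (δ : Γ) => φΛ (blockMap Λ (r δ) x) (q δ)) ((fun (z : Γ → Z) (δ : Γ) => ψΛ (blockMap Λ (r δ) z) (q δ)) z) = z := by
    have hall : ∀ᵐ z ∂ηΓ, ∀ s (_ : s ∈ S), φΛ (ψΛ (blockMap Λ s z)) = blockMap Λ s z :=
      (ae_ball_iff hScnt).mpr fun s _ => haeη _ hφψ s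
    filter_upwards [hall] with z hz
    funext δ
    show φΛ (blockMap Λ (r δ) ((fun (z : Γ → Z) (δ : Γ) => ψΛ (blockMap Λ (r δ) z) (q δ)) z)) (q δ) = z δ
    rw [hblockψ (r δ) (hrS δ) z, hz (r δ) (hrS δ)]
    show z (r δ * ↑(q δ)) = z δ
    rw [hfac δ]
  -- measure preservation
  have hmapφ : νΓ.map (fun (x : Γ → Y) (δ : Γ) => φΛ (blockMap Λ (r δ) x) (q δ)) = ηΓ := by
    refine isProductMeasure_unique ?_ hηΓ
    constructor
    · exact Measure.isProbabilityMeasure_map hφGm.aemeasurable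
    · intro t A hA
      rw [Measure.map_apply hφGm (measurableSet_cylBase t A hA)]
      have hE : ∀ s, MeasurableSet
          {w : ↥Λ → Y | ∀ γ ∈ t.filter (fun γ => r γ = s), φΛ w (q γ) ∈ A γ} := by
        intro s
        have h0 : {w : ↥Λ → Y | ∀ γ ∈ t.filter (fun γ => r γ = s), φΛ w (q γ) ∈ A γ}
            = ⋂ γ ∈ t.filter (fun γ => r γ = s), (fun w => φΛ w (q γ)) ⁻¹' (A γ) := by
          ext w; simp
        rw [h0]
        exact Finset.measurableSet_biInter _ fun γ _ =>
          ((measurable_pi_apply (q γ)).comp hφΛm) (hA γ)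
      have hpre : (fun (x : Γ → Y) (δ : Γ) => φΛ (blockMap Λ (r δ) x) (q δ)) ⁻¹' {z | ∀ γ ∈ t, z γ ∈ A γ}
          = {x | ∀ s ∈ t.image r, blockMap Λ s x ∈
              {w : ↥Λ → Y | ∀ γ ∈ t.filter (fun γ => r γ = s), φΛ w (q γ) ∈ A γ}}
            ∩ {x : Γ → Y | ∀ γ ∈ (∅ : Finset Γ), x γ ∈ (Set.univ : Set Y)} := by
        ext x
        simp only [Set.mem_preimage, Set.mem_setOf_eq, Set.mem_inter_iff,
          Finset.notMem_empty, false_implies, implies_true, and_true]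
        constructor
        · intro h s hs γ hγ
          rw [Finset.mem_filter] at hγ
          have h2 := h γ hγ.1
          rw [← hγ.2]
          exact h2
        · intro h γ hγ
          exact h (r γ) (Finset.mem_image_of_mem r hγ) γ (Finset.mem_filter.mpr ⟨hγ, rfl⟩)
      rw [hpre]
      rw [blockIndep Λ hνΓ hνΛ S r hrblock _ hE (t.image r)
        (by
          intro a ha
          obtain ⟨γ, _, rfl⟩ := Finset.mem_image.mp (Finset.mem_coe.mp ha)
          exact hrS γ)
        ∅ (fun _ => (Set.univ : Set Y)) (fun _ => MeasurableSet.univ) (by simp)]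
      rw [Finset.prod_empty, mul_one]
      have hνE : ∀ s ∈ t.image r,
          νΛ {w : ↥Λ → Y | ∀ γ ∈ t.filter (fun γ => r γ = s), φΛ w (q γ) ∈ A γ}
            = ∏ γ ∈ t.filter (fun γ => r γ = s), η (A γ) := by
        intro s _
        have hinj : Set.InjOn q ↑(t.filter (fun γ => r γ = s)) := by
          intro a ha b hb hab
          have ha' := Finset.mem_filter.mp (Finset.mem_coe.mp ha)
          have hb' := Finset.mem_filter.mp (Finset.mem_coe.mp hb)
          calc a = r a * ↑(q a) := (hfac a).symm
            _ = r b * ↑(q b) := by rw [ha'.2, hb'.2, hab]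
            _ = b := hfac b
        obtain ⟨u', D', hD', hset, hprod, -⟩ :=
          exists_cyl_reindex η (t.filter (fun γ => r γ = s)) hinj A hA
        have hEeq : {w : ↥Λ → Y | ∀ γ ∈ t.filter (fun γ => r γ = s), φΛ w (q γ) ∈ A γ}
            = φΛ ⁻¹' {w : ↥Λ → Z | ∀ γ ∈ t.filter (fun γ => r γ = s), w (q γ) ∈ A γ} := rfl
        have hval : νΛ (φΛ ⁻¹' {w : ↥Λ → Z | ∀ i ∈ u', w i ∈ D' i})
            = ηΛ {w : ↥Λ → Z | ∀ i ∈ u', w i ∈ D' i} := by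
          rw [← hφmp.map_eq, Measure.map_apply hφΛm (measurableSet_cylBase u' D' hD')]
        rw [hEeq, hset, hval, hηΛ.2 u' D' hD', hprod]
      rw [Finset.prod_congr rfl hνE]
      exact Finset.prod_fiberwise_of_maps_to (fun γ hγ => Finset.mem_image_of_mem r hγ)
        (fun γ => η (A γ))
  -- cofinite equivariance
  have hφcof : CofinitelyEquivariant b c νΓ (fun (x : Γ → Y) (δ : Γ) => φΛ (blockMap Λ (r δ) x) (q δ)) := by
    have hall : ∀ᵐ x ∂νΓ, ∀ s (_ : s ∈ S), ∀ u : ↥Λ → Y, simRel b u (blockMap Λ s x) →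
        ∀ lam : ↥Λ, simRel c (φΛ (shiftS lam u)) (shiftS lam (φΛ (blockMap Λ s x))) :=
      (ae_ball_iff hScnt).mpr fun s _ => haeν _ hφeq s
    filter_upwards [hall] with x hx x' hx' γ
    exact equivCore Λ S b c r q hrS hfac hrmul hqmul hrfix hSfin' φΛ x
      (fun s hs => hx s hs) x' hx' γ
  have hψcof : CofinitelyEquivariant c b ηΓ (fun (z : Γ → Z) (δ : Γ) => ψΛ (blockMap Λ (r δ) z) (q δ)) := by
    have hall : ∀ᵐ z ∂ηΓ, ∀ s (_ : s ∈ S), ∀ u : ↥Λ → Z, simRel c u (blockMap Λ s z) →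
        ∀ lam : ↥Λ, simRel b (ψΛ (shiftS lam u)) (shiftS lam (ψΛ (blockMap Λ s z))) :=
      (ae_ball_iff hScnt).mpr fun s _ => haeη _ hψeq s
    filter_upwards [hall] with z hz z' hz' γ
    exact equivCore Λ S c b r q hrS hfac hrmul hqmul hrfix hSfin' ψΛ z
      (fun s hs => hz s hs) z' hz' γ
  exact ⟨(fun (x : Γ → Y) (δ : Γ) => φΛ (blockMap Λ (r δ) x) (q δ)), (fun (z : Γ → Z) (δ : Γ) => ψΛ (blockMap Λ (r δ) z) (q δ)), ⟨hφGm, hmapφ⟩, hψGm, hψφG, hφψG, hφcof, hψcof⟩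

end OEW
end

section
/- Let Γ be a countable group acting on countable sets V and W such that every Γ-orbit in V and every Γ-orbit in W is infinite, and every nonidentity element of Γ fixes at most finitely many points of W. Let B ↷ (X,μ) and C ↷ (Y,ν) be p.m.p. actions of countable groups on standard probability spaces, and consider the associated permutational wreath product actions B≀_V Γ ↷ (X^V, μ^V) and C≀_W Γ ↷ (Y^W, ν^W). Suppose θ: (X^V, μ^V) → (Y^W, ν^W) is a measure-preserving map that is Γ-equivariant (θ(γ·x) = γ·θ(x) for all γ ∈ Γ and a.e. x) and satisfies θ((B≀_V Γ)·x) ⊆ (C≀_W Γ)·θ(x) for a.e. x ∈ X^V. Then θ((⊕_V B)·x) ⊆ (⊕_W C)·θ(x) for a.e. x ∈ X^V. -/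
/-!  Common definitions: wreath products, measured group actions, orbit equivalence,
measure equivalence, measurable splittings, cocycle superrigidity, and cofinitely
equivariant maps.  -/

open MeasureTheory Function Filter Set
open scoped ENNReal

namespace OEW


variable {V B Γ : Type}

variable {V B C Γ X Y Z : Type}

variable {X : Type}

variable {X Y Z : Type}

/-! ### Auxiliary material for Statement 19 -/

section Aux19

open MeasureTheory

instance dsum.instCountable {V B : Type} [Group B] [Countable V] [Countable B] :
    Countable (dsum V B) := by
  classical
  have hinj : Function.Injective (fun f : dsum V B =>
      (Set.Finite.image (fun v => (v, (f : V → B) v)) f.2).toFinset) := by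
    intro f g hfg
    apply Subtype.ext
    funext v
    have key : ∀ (h₁ h₂ : dsum V B),
        (Set.Finite.image (fun v => (v, (h₁ : V → B) v)) h₁.2).toFinset =
          (Set.Finite.image (fun v => (v, (h₂ : V → B) v)) h₂.2).toFinset →
        (h₂ : V → B) v ≠ 1 → (h₁ : V → B) v = (h₂ : V → B) v := by
      intro h₁ h₂ heq hne
      have hv : (v, (h₂ : V → B) v) ∈
          (Set.Finite.image (fun v => (v, (h₂ : V → B) v)) h₂.2).toFinset := by
        rw [Set.Finite.mem_toFinset]
        exact ⟨v, hne, rfl⟩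
      rw [← heq, Set.Finite.mem_toFinset] at hv
      obtain ⟨u, _, huv⟩ := hv
      obtain ⟨h1, h2⟩ := Prod.mk_inj.mp huv
      rw [← h1] at h2 ⊢
      exact h2
    by_cases hg : (g : V → B) v = 1
    · by_cases hf : (f : V → B) v = 1
      · rw [hf, hg]
      · exact ((key g f hfg.symm hf).symm)
    · exact key f g hfg hg
  exact hinj.countable

variable {ι Z : Type} [MeasurableSpace Z]

lemma measurableSet_boxSet (s : Finset ι) (A : ι → Set Z) (hA : ∀ i, MeasurableSet (A i)) :
    MeasurableSet {x : ι → Z | ∀ i ∈ s, x i ∈ A i} := by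
  have h : {x : ι → Z | ∀ i ∈ s, x i ∈ A i} = ⋂ i ∈ (s : Set ι), (fun x : ι → Z => x i) ⁻¹' A i := by
    ext x; simp
  rw [h]
  exact MeasurableSet.biInter s.countable_toSet fun i _ => (measurable_pi_apply i) (hA i)

/-- The collection of finite-dimensional boxes. -/
def boxes (ι Z : Type) [MeasurableSpace Z] : Set (Set (ι → Z)) :=
  {t | ∃ (s : Finset ι) (A : ι → Set Z), (∀ i, MeasurableSet (A i)) ∧
    t = {x | ∀ i ∈ s, x i ∈ A i}}

lemma generateFrom_boxes : MeasurableSpace.generateFrom (boxes ι Z) = MeasurableSpace.pi := by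
  classical
  apply le_antisymm
  · rw [MeasurableSpace.generateFrom_le_iff]
    rintro t ⟨s, A, hA, rfl⟩
    exact measurableSet_boxSet s A hA
  · rw [show (MeasurableSpace.pi : MeasurableSpace (ι → Z)) =
        ⨆ i, MeasurableSpace.comap (fun x : ι → Z => x i) inferInstance from rfl]
    refine iSup_le fun i => ?_
    rintro t ⟨A, hA, rfl⟩
    apply MeasurableSpace.measurableSet_generateFrom
    refine ⟨{i}, fun j => if j = i then A else Set.univ, ?_, ?_⟩
    · intro j; dsimp only; split_ifs; exacts [hA, MeasurableSet.univ]
    · ext x; simp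

lemma isPiSystem_boxes : IsPiSystem (boxes ι Z) := by
  classical
  rintro t₁ ⟨s₁, A₁, hA₁, rfl⟩ t₂ ⟨s₂, A₂, hA₂, rfl⟩ _
  refine ⟨s₁ ∪ s₂, fun i =>
      (if i ∈ s₁ then A₁ i else Set.univ) ∩ (if i ∈ s₂ then A₂ i else Set.univ),
      fun i => MeasurableSet.inter
        (by split_ifs; exacts [hA₁ i, MeasurableSet.univ])
        (by split_ifs; exacts [hA₂ i, MeasurableSet.univ]), ?_⟩
  ext x
  simp only [Set.mem_inter_iff, Set.mem_setOf_eq, Finset.mem_union]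
  constructor
  · rintro ⟨h₁, h₂⟩ i _
    constructor
    · split_ifs with h
      · exact h₁ i h
      · trivial
    · split_ifs with h
      · exact h₂ i h
      · trivial
  · intro h
    constructor
    · intro i hi
      have := (h i (Or.inl hi)).1
      rwa [if_pos hi] at this
    · intro i hi
      have := (h i (Or.inr hi)).2
      rwa [if_pos hi] at this

lemma IsProductMeasure.unique {ν : Measure Z} {m₁ m₂ : Measure (ι → Z)}
    (h₁ : IsProductMeasure ν m₁) (h₂ : IsProductMeasure ν m₂) : m₁ = m₂ := by
  haveI := h₁.1; haveI := h₂.1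
  refine ext_of_generate_finite _ generateFrom_boxes.symm isPiSystem_boxes ?_ (by simp)
  rintro t ⟨s, A, hA, rfl⟩
  rw [h₁.2 s A hA, h₂.2 s A hA]

lemma measurePreserving_pi_map {ν : Measure Z} {m : Measure (ι → Z)}
    (hm : IsProductMeasure ν m) (g : ι → Z → Z) (hg : ∀ i, MeasurePreserving (g i) ν ν) :
    MeasurePreserving (fun (x : ι → Z) (i : ι) => g i (x i)) m m := by
  haveI := hm.1
  have hmeas : Measurable (fun (x : ι → Z) (i : ι) => g i (x i)) :=
    measurable_pi_lambda _ fun i => ((hg i).measurable).comp (measurable_pi_apply i)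
  refine ⟨hmeas, ?_⟩
  refine IsProductMeasure.unique ⟨Measure.isProbabilityMeasure_map hmeas.aemeasurable, ?_⟩ hm
  intro s A hA
  rw [Measure.map_apply hmeas (measurableSet_boxSet s A hA)]
  have h : (fun (x : ι → Z) (i : ι) => g i (x i)) ⁻¹' {x | ∀ i ∈ s, x i ∈ A i}
      = {x | ∀ i ∈ s, x i ∈ (g i) ⁻¹' (A i)} := rfl
  rw [h, hm.2 s _ (fun i => (hg i).measurable (hA i))]
  exact Finset.prod_congr rfl fun i _ => (hg i).measure_preimage (hA i).nullMeasurableSet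

lemma measurePreserving_shiftS_of_product {Γ : Type} [Group Γ] [MulAction Γ ι]
    {ν : Measure Z} {m : Measure (ι → Z)} (hm : IsProductMeasure ν m) (γ : Γ) :
    MeasurePreserving (shiftS γ : (ι → Z) → (ι → Z)) m m := by
  haveI := hm.1
  have hmeas : Measurable (shiftS γ : (ι → Z) → (ι → Z)) :=
    measurable_pi_lambda _ fun v => measurable_pi_apply _
  refine ⟨hmeas, ?_⟩
  refine IsProductMeasure.unique ⟨Measure.isProbabilityMeasure_map hmeas.aemeasurable, ?_⟩ hm
  intro s A hA
  classical
  rw [Measure.map_apply hmeas (measurableSet_boxSet s A hA)]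
  have hpre : (shiftS γ : (ι → Z) → (ι → Z)) ⁻¹' {x | ∀ i ∈ s, x i ∈ A i}
      = {x | ∀ j ∈ s.image (fun i => γ⁻¹ • i), x j ∈ A (γ • j)} := by
    ext x
    simp only [Set.mem_preimage, Set.mem_setOf_eq, Finset.mem_image, shiftS]
    constructor
    · rintro h j ⟨i, hi, rfl⟩
      rw [smul_inv_smul]
      exact h i hi
    · intro h i hi
      have := h (γ⁻¹ • i) ⟨i, hi, rfl⟩
      rwa [smul_inv_smul] at this
  rw [hpre, hm.2 _ _ (fun j => hA (γ • j))]
  rw [Finset.prod_image (fun a _ b _ h => by simpa using congrArg (fun z => γ • z) h)]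
  exact Finset.prod_congr rfl fun i _ => by rw [smul_inv_smul]

end Aux19

section Aux19b

open MeasureTheory

variable {ι Z : Type} [MeasurableSpace Z]

lemma exists_finite_approx (m : Measure (ι → Z)) [IsFiniteMeasure m]
    {E : Set (ι → Z)} (hE : MeasurableSet E) :
    ∀ ε : ℝ≥0∞, 0 < ε → ε ≠ ⊤ → ∃ (F : Finset ι) (C : Set (ι → Z)), MeasurableSet C ∧
      (∀ x x' : ι → Z, (∀ i ∈ F, x i = x' i) → (x ∈ C ↔ x' ∈ C)) ∧
      m (symmDiff E C) < ε := by
  have hE' : MeasurableSet[MeasurableSpace.generateFrom (boxes ι Z)] E := by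
    rw [generateFrom_boxes]; exact hE
  refine MeasurableSpace.generateFrom_induction (boxes ι Z)
    (fun t _ => ∀ ε : ℝ≥0∞, 0 < ε → ε ≠ ⊤ → ∃ (F : Finset ι) (C : Set (ι → Z)),
      MeasurableSet C ∧ (∀ x x' : ι → Z, (∀ i ∈ F, x i = x' i) → (x ∈ C ↔ x' ∈ C)) ∧
      m (symmDiff t C) < ε) ?_ ?_ ?_ ?_ E hE'
  · rintro t ⟨s, A, hA, rfl⟩ _ ε hε _
    refine ⟨s, _, measurableSet_boxSet s A hA, ?_, ?_⟩
    · intro x x' h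
      simp only [Set.mem_setOf_eq]
      constructor
      · intro hx i hi; rw [← h i hi]; exact hx i hi
      · intro hx i hi; rw [h i hi]; exact hx i hi
    · rw [symmDiff_self]
      simpa using hε
  · intro ε hε _
    exact ⟨∅, ∅, MeasurableSet.empty, fun x x' _ => Iff.rfl,
      by rw [symmDiff_self]; simpa using hε⟩
  · intro t _ IH ε hε hεt
    obtain ⟨F, C, hC, hdet, hlt⟩ := IH ε hε hεt
    exact ⟨F, Cᶜ, hC.compl, fun x x' h => not_congr (hdet x x' h),
      by rwa [compl_symmDiff_compl]⟩
  · intro f hfm IH ε hε hεt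
    have hfmeas : ∀ n, MeasurableSet (f n) := fun n => by
      rw [← generateFrom_boxes]; exact hfm n
    have hhalf_pos : (0 : ℝ≥0∞) < ε / 2 := ENNReal.half_pos hε.ne'
    have hhalf_top : ε / 2 ≠ ⊤ := (ENNReal.div_lt_top hεt (by norm_num)).ne
    have hacc_meas : ∀ n : ℕ, MeasurableSet (Set.accumulate f n) := fun n =>
      MeasurableSet.iUnion fun i => MeasurableSet.iUnion fun _ => hfmeas i
    have htend : Filter.Tendsto (fun n => m ((⋃ i, f i) \ Set.accumulate f n)) Filter.atTop
        (nhds 0) := by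
      have h0 : (⋂ n, (⋃ i, f i) \ Set.accumulate f n) = ∅ := by
        rw [← Set.diff_iUnion, Set.iUnion_accumulate, Set.diff_self]
      have := tendsto_measure_iInter_atTop (μ := m)
        (s := fun n => (⋃ i, f i) \ Set.accumulate f n)
        (fun n => ((MeasurableSet.iUnion hfmeas).diff (hacc_meas n)).nullMeasurableSet)
        (fun n n' hnn' => Set.diff_subset_diff_right (Set.monotone_accumulate hnn'))
        ⟨0, measure_ne_top m _⟩
      rwa [h0, measure_empty] at this
    obtain ⟨N, hN⟩ : ∃ N, m ((⋃ i, f i) \ Set.accumulate f N) < ε / 2 :=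
      (htend.eventually_lt_const hhalf_pos).exists
    set δ : ℝ≥0∞ := ε / 2 / (N + 1) with hδdef
    have hδ0 : 0 < δ := ENNReal.div_pos hhalf_pos.ne' (by simp)
    have hδt : δ ≠ ⊤ := (ENNReal.div_lt_top hhalf_top (by simp)).ne
    have IH' : ∀ n : ℕ, ∃ (F : Finset ι) (C : Set (ι → Z)), MeasurableSet C ∧
        (∀ x x' : ι → Z, (∀ i ∈ F, x i = x' i) → (x ∈ C ↔ x' ∈ C)) ∧
        m (symmDiff (f n) C) < δ := fun n => IH n δ hδ0 hδt
    choose F C hCm hCdet hClt using IH'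
    classical
    refine ⟨(Finset.range (N + 1)).biUnion F, ⋃ n ∈ Finset.range (N + 1), C n,
      MeasurableSet.biUnion (Finset.range (N + 1)).countable_toSet (fun n _ => hCm n), ?_, ?_⟩
    · intro x x' h
      simp only [Set.mem_iUnion]
      refine exists_congr fun n => exists_congr fun hn => hCdet n x x' fun i hi =>
        h i (Finset.mem_biUnion.mpr ⟨n, hn, hi⟩)
    · have hsub : symmDiff (⋃ i, f i) (⋃ n ∈ Finset.range (N + 1), C n) ⊆
          ((⋃ i, f i) \ Set.accumulate f N) ∪
            ⋃ n ∈ Finset.range (N + 1), symmDiff (f n) (C n) := by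
        intro x hx
        rcases Set.mem_symmDiff.mp hx with ⟨hx1, hx2⟩ | ⟨hx1, hx2⟩
        · by_cases hacc : x ∈ Set.accumulate f N
          · obtain ⟨n, hn, hxn⟩ := Set.mem_accumulate.mp hacc
            refine Or.inr (Set.mem_biUnion (Finset.mem_range.mpr (Nat.lt_succ_of_le hn)) ?_)
            refine Set.mem_symmDiff.mpr (Or.inl ⟨hxn, fun hc => hx2 ?_⟩)
            exact Set.mem_biUnion (Finset.mem_range.mpr (Nat.lt_succ_of_le hn)) hc
          · exact Or.inl ⟨hx1, hacc⟩
        · simp only [Set.mem_iUnion] at hx1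
          obtain ⟨n, hn, hxn⟩ := hx1
          refine Or.inr (Set.mem_biUnion hn (Set.mem_symmDiff.mpr (Or.inr ⟨hxn, fun hc => ?_⟩)))
          exact hx2 (Set.mem_iUnion.mpr ⟨n, hc⟩)
      calc m (symmDiff (⋃ i, f i) (⋃ n ∈ Finset.range (N + 1), C n))
          ≤ m (((⋃ i, f i) \ Set.accumulate f N) ∪
              ⋃ n ∈ Finset.range (N + 1), symmDiff (f n) (C n)) := measure_mono hsub
        _ ≤ m ((⋃ i, f i) \ Set.accumulate f N) +
              m (⋃ n ∈ Finset.range (N + 1), symmDiff (f n) (C n)) := measure_union_le _ _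
        _ ≤ m ((⋃ i, f i) \ Set.accumulate f N) +
              ∑ n ∈ Finset.range (N + 1), m (symmDiff (f n) (C n)) :=
            add_le_add le_rfl (measure_biUnion_finset_le _ _)
        _ ≤ m ((⋃ i, f i) \ Set.accumulate f N) + ∑ _n ∈ Finset.range (N + 1), δ :=
            add_le_add le_rfl (Finset.sum_le_sum fun n _ => (hClt n).le)
        _ ≤ m ((⋃ i, f i) \ Set.accumulate f N) + ε / 2 := by
            rw [Finset.sum_const, Finset.card_range, nsmul_eq_mul, hδdef]
            exact add_le_add le_rfl (by push_cast; exact ENNReal.mul_div_le)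
        _ < ε / 2 + ε / 2 := (ENNReal.add_lt_add_iff_right hhalf_top).mpr hN
        _ = ε := ENNReal.add_halves ε

lemma measure_iInter_pair {W Y : Type} [MeasurableSpace Y] {ν : Measure Y}
    {m : Measure (W → Y)} (hm : IsProductMeasure ν m)
    {A : Set Y} (hA : MeasurableSet A) {k : ℕ} {a b : Fin k → W}
    (hinj : Function.Injective (fun p : Fin k × Bool => cond p.2 (a p.1) (b p.1))) :
    m (⋂ i : Fin k, {y : W → Y | y (a i) ∈ A ↔ y (b i) ∈ A})
      = (ν A * ν A + ν Aᶜ * ν Aᶜ) ^ k := by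
  classical
  set π : Fin k × Bool → W := fun p => cond p.2 (a p.1) (b p.1) with hπdef
  set As : Bool → Set Y := fun t => cond t A Aᶜ with hAsdef
  have hAsm : ∀ t, MeasurableSet (As t) := fun t => by cases t <;> simp [hAsdef, hA, hA.compl]
  set Bε : (Fin k → Bool) → Set (W → Y) :=
    fun ε => {y | ∀ p : Fin k × Bool, y (π p) ∈ As (ε p.1)} with hBεdef
  have hunion : (⋂ i : Fin k, {y : W → Y | y (a i) ∈ A ↔ y (b i) ∈ A})
      = ⋃ ε : Fin k → Bool, Bε ε := by
    ext y
    simp only [Set.mem_iInter, Set.mem_setOf_eq, Set.mem_iUnion, hBεdef]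
    constructor
    · intro h
      refine ⟨fun i => if y (a i) ∈ A then true else false, ?_⟩
      rintro ⟨i, t⟩
      by_cases hy : y (a i) ∈ A
      · cases t <;> simp [hπdef, hAsdef, hy, (h i).mp hy]
      · cases t
        · simp only [hπdef, hAsdef, if_neg hy, cond_false]
          exact fun hb => hy ((h i).mpr hb)
        · simp only [hπdef, hAsdef, if_neg hy, cond_true, cond_false]
          exact hy
    · rintro ⟨ε, hy⟩ i
      have h1 := hy (i, true)
      have h2 := hy (i, false)
      cases hεi : ε i <;> rw [hεi] at h1 h2 <;>
        simp only [hπdef, hAsdef, cond_true, cond_false] at h1 h2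
      · exact iff_of_false h1 h2
      · exact iff_of_true h1 h2
  set 𝒜 : (Fin k → Bool) → W → Set Y := fun ε w =>
    if h : ∃ p, π p = w then As (ε (Classical.choose h).1) else Set.univ with h𝒜def
  have hkey : ∀ (ε : Fin k → Bool) (p : Fin k × Bool), 𝒜 ε (π p) = As (ε p.1) := by
    intro ε p
    have hex : ∃ q, π q = π p := ⟨p, rfl⟩
    have : Classical.choose hex = p := hinj (Classical.choose_spec hex)
    simp only [h𝒜def, dif_pos hex, this]
  have h𝒜m : ∀ ε w, MeasurableSet (𝒜 ε w) := by
    intro ε w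
    simp only [h𝒜def]
    split
    · exact hAsm _
    · exact MeasurableSet.univ
  have hBbox : ∀ ε, Bε ε = {y : W → Y | ∀ w ∈ Finset.image π Finset.univ, y w ∈ 𝒜 ε w} := by
    intro ε
    ext y
    simp only [hBεdef, Set.mem_setOf_eq, Finset.mem_image, Finset.mem_univ, true_and]
    constructor
    · rintro h w ⟨p, rfl⟩
      rw [hkey]
      exact h p
    · intro h p
      have := h (π p) ⟨p, rfl⟩
      rwa [hkey] at this
  have hBmeas : ∀ ε, m (Bε ε) = ∏ i : Fin k, (ν (As (ε i)) * ν (As (ε i))) := by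
    intro ε
    rw [hBbox ε, hm.2 _ _ (h𝒜m ε)]
    rw [Finset.prod_image (fun p _ q _ h => hinj h)]
    have : ∀ p : Fin k × Bool, ν (𝒜 ε (π p)) = ν (As (ε p.1)) := fun p => by rw [hkey]
    rw [Finset.prod_congr rfl fun p _ => this p]
    rw [Fintype.prod_prod_type (fun p : Fin k × Bool => ν (As (ε p.1)))]
    exact Finset.prod_congr rfl fun i _ => by rw [Fintype.prod_bool]
  have hBdisj : Pairwise (Function.onFun Disjoint Bε) := by
    intro ε ε' hne
    obtain ⟨i, hi⟩ := Function.ne_iff.mp hne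
    rw [Function.onFun, Set.disjoint_left]
    intro y hy hy'
    have h1 := hy (i, true)
    have h2 := hy' (i, true)
    cases hε : ε i <;> cases hε' : ε' i <;> rw [hε] at h1 <;> rw [hε'] at h2 <;>
      simp only [hAsdef, cond_true, cond_false] at h1 h2
    · exact hi (hε.trans hε'.symm)
    · exact h1 h2
    · exact h2 h1
    · exact hi (hε.trans hε'.symm)
  have hBm : ∀ ε, MeasurableSet (Bε ε) := by
    intro ε
    have : Bε ε = ⋂ p : Fin k × Bool, (fun y : W → Y => y (π p)) ⁻¹' As (ε p.1) := by
      ext y; simp [hBεdef]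
    rw [this]
    exact MeasurableSet.iInter fun p => (measurable_pi_apply (π p)) (hAsm (ε p.1))
  rw [hunion, measure_iUnion hBdisj hBm, tsum_fintype]
  have : ∑ ε : Fin k → Bool, m (Bε ε)
      = ∑ ε : Fin k → Bool, ∏ i : Fin k, (ν (As (ε i)) * ν (As (ε i))) :=
    Finset.sum_congr rfl fun ε _ => hBmeas ε
  rw [this]
  have hswap := Finset.prod_univ_sum (fun _ : Fin k => (Finset.univ : Finset Bool))
    (fun _ t => ν (As t) * ν (As t))
  rw [Fintype.piFinset_univ] at hswap
  rw [← hswap]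
  have : ∀ i : Fin k, ∑ t : Bool, (ν (As t) * ν (As t)) = ν A * ν A + ν Aᶜ * ν Aᶜ := by
    intro i
    rw [Fintype.sum_bool]
    simp [hAsdef]
  rw [Finset.prod_congr rfl fun i _ => this i, Finset.prod_const, Finset.card_univ,
    Fintype.card_fin]

end Aux19b
section Aux19c

open scoped Pointwise

variable {Γ V W : Type} [Group Γ] [MulAction Γ V] [MulAction Γ W]

lemma stabilizer_not_finiteIndex {t : V} (h : (MulAction.orbit Γ t).Infinite) :
    ¬ (MulAction.stabilizer Γ t).FiniteIndex := by
  intro hfi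
  haveI := hfi
  have hfin : Finite (MulAction.orbit Γ t) :=
    Finite.of_equiv _ (MulAction.orbitEquivQuotientStabilizer Γ t).symm
  exact h (Set.finite_coe_iff.mp hfin)

lemma exists_avoid (hV : ∀ v : V, (MulAction.orbit Γ v).Infinite)
    (hW : ∀ w : W, (MulAction.orbit Γ w).Infinite)
    (F D : Finset V) (w₀ : W) (Bad : Finset W) :
    ∃ lam : Γ, (∀ f ∈ F, lam⁻¹ • f ∉ D) ∧ lam⁻¹ • w₀ ∉ Bad := by
  classical
  by_contra hcon
  push_neg at hcon
  set ι := ((↥F) × (↥D)) ⊕ (↥Bad) with hιdef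
  set H : ι → Subgroup Γ := fun i =>
    Sum.rec (fun fv => MulAction.stabilizer Γ (fv.2 : V))
      (fun u => MulAction.stabilizer Γ (u : W)) i with hHdef
  set g : ι → Γ := fun i =>
    Sum.rec
      (fun fv => if h : ∃ lam₀ : Γ, lam₀ • (fv.2 : V) = (fv.1 : V) then h.choose else 1)
      (fun u => if h : ∃ lam₀ : Γ, lam₀ • (u : W) = w₀ then h.choose else 1) i with hgdef
  have hcovers : ⋃ i ∈ (Finset.univ : Finset ι), g i • (H i : Set Γ) = Set.univ := by
    ext lam
    simp only [Set.mem_univ, iff_true, Set.mem_iUnion, Finset.mem_univ, exists_prop, true_and]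
    rcases Classical.em (∀ f ∈ F, lam⁻¹ • f ∉ D) with hF | hF
    · -- then lam⁻¹ • w₀ ∈ Bad
      have hB : lam⁻¹ • w₀ ∈ Bad := hcon lam hF
      have hex : ∃ lam₀ : Γ, lam₀ • (lam⁻¹ • w₀) = w₀ := ⟨lam, smul_inv_smul lam w₀⟩
      refine ⟨Sum.inr ⟨lam⁻¹ • w₀, hB⟩, ?_⟩
      rw [mem_leftCoset_iff]
      have hgi : g (Sum.inr ⟨lam⁻¹ • w₀, hB⟩)
          = dite (∃ lam₀ : Γ, lam₀ • (lam⁻¹ • w₀) = w₀) (fun h => h.choose) (fun _ => 1) := rfl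
      have hmem : (g (Sum.inr ⟨lam⁻¹ • w₀, hB⟩))⁻¹ * lam
          ∈ MulAction.stabilizer Γ (lam⁻¹ • w₀) := by
        rw [MulAction.mem_stabilizer_iff, mul_smul, smul_inv_smul, hgi, dif_pos hex,
          inv_smul_eq_iff, hex.choose_spec]
      exact hmem
    · push_neg at hF
      obtain ⟨f, hf, hfD⟩ := hF
      have hex : ∃ lam₀ : Γ, lam₀ • (lam⁻¹ • f) = f := ⟨lam, smul_inv_smul lam f⟩
      refine ⟨Sum.inl ⟨⟨f, hf⟩, ⟨lam⁻¹ • f, hfD⟩⟩, ?_⟩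
      rw [mem_leftCoset_iff]
      have hgi : g (Sum.inl ⟨⟨f, hf⟩, ⟨lam⁻¹ • f, hfD⟩⟩)
          = dite (∃ lam₀ : Γ, lam₀ • (lam⁻¹ • f) = f) (fun h => h.choose) (fun _ => 1) := rfl
      have hmem : (g (Sum.inl ⟨⟨f, hf⟩, ⟨lam⁻¹ • f, hfD⟩⟩))⁻¹ * lam
          ∈ MulAction.stabilizer Γ (lam⁻¹ • f) := by
        rw [MulAction.mem_stabilizer_iff, mul_smul, smul_inv_smul, hgi, dif_pos hex,
          inv_smul_eq_iff, hex.choose_spec]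
      exact hmem
  obtain ⟨k, _, hk⟩ := Subgroup.exists_finiteIndex_of_leftCoset_cover hcovers
  rcases k with fv | u
  · exact stabilizer_not_finiteIndex (hV (fv.2 : V)) hk
  · exact stabilizer_not_finiteIndex (hW (u : W)) hk

lemma exists_fresh_points (hV : ∀ v : V, (MulAction.orbit Γ v).Infinite)
    (hW : ∀ w : W, (MulAction.orbit Γ w).Infinite)
    (F D : Finset V) (w₀ : W) (γ : Γ)
    (hγfix : {w : W | γ • w = w}.Finite) (s : Finset W) :
    ∀ k : ℕ, ∃ u : Fin k → W,
      (∀ i, ∃ lam : Γ, lam⁻¹ • w₀ = u i ∧ ∀ f ∈ F, lam⁻¹ • f ∉ D) ∧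
      (∀ i, u i ∉ s) ∧
      Function.Injective (fun p : Fin k × Bool => cond p.2 (u p.1) (γ⁻¹ • u p.1)) := by
  classical
  intro k
  induction k with
  | zero =>
    refine ⟨fun i => i.elim0, fun i => i.elim0, fun i => i.elim0, ?_⟩
    intro p q _
    exact p.1.elim0
  | succ n IH =>
    obtain ⟨u, hgood, hs, hinj⟩ := IH
    set Used : Finset W :=
      (Finset.univ.image u) ∪ (Finset.univ.image fun i => γ⁻¹ • u i) with hUdef
    set Bad : Finset W := ((s ∪ Used) ∪ Used.image (fun w => γ • w)) ∪ hγfix.toFinset with hBdef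
    obtain ⟨lam, hlamF, hlamB⟩ := exists_avoid hV hW F D w₀ Bad
    set unew : W := lam⁻¹ • w₀ with hunewdef
    have hu_mem : ∀ j : Fin n, u j ∈ Used := fun j => by
      simp [hUdef, Finset.mem_union, Finset.mem_image]
    have hγu_mem : ∀ j : Fin n, γ⁻¹ • u j ∈ Used := fun j => by
      simp only [hUdef, Finset.mem_union, Finset.mem_image]
      exact Or.inr ⟨j, Finset.mem_univ j, rfl⟩
    have hUsed : unew ∉ Used := fun h => hlamB (by
      simp only [hBdef, Finset.mem_union]
      exact Or.inl (Or.inl (Or.inr h)))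
    have hγUsed : γ⁻¹ • unew ∉ Used := by
      intro h
      apply hlamB
      have hmem : unew ∈ Used.image (fun w => γ • w) :=
        Finset.mem_image.mpr ⟨_, h, smul_inv_smul γ unew⟩
      simp only [hBdef, Finset.mem_union]
      exact Or.inl (Or.inr hmem)
    have hsnew : unew ∉ s := fun h => hlamB (by
      simp only [hBdef, Finset.mem_union]
      exact Or.inl (Or.inl (Or.inl h)))
    have hfixnew : γ⁻¹ • unew ≠ unew := by
      intro h
      apply hlamB
      have h2 := congrArg (fun z => γ • z) h
      simp only [smul_inv_smul] at h2
      simp only [hBdef, Finset.mem_union]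
      exact Or.inr (hγfix.mem_toFinset.mpr h2.symm)
    have hnotin : ∀ (t t' : Bool) (j : Fin n),
        (cond t unew (γ⁻¹ • unew) : W) ≠ cond t' (u j) (γ⁻¹ • u j) := by
      intro t t' j h
      cases t <;> cases t' <;> simp only [Bool.cond_false, Bool.cond_true] at h
      · exact hUsed ((MulAction.injective γ⁻¹ h) ▸ hu_mem j)
      · exact hγUsed (h ▸ (hu_mem j))
      · exact hUsed (h ▸ (hγu_mem j))
      · exact hUsed (h ▸ (hu_mem j))
    refine ⟨Fin.snoc u unew, ?_, ?_, ?_⟩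
    · intro i
      rcases Fin.eq_castSucc_or_eq_last i with ⟨j, rfl⟩ | rfl
      · obtain ⟨lam', h1, h2⟩ := hgood j
        exact ⟨lam', by rwa [Fin.snoc_castSucc], h2⟩
      · exact ⟨lam, by rw [Fin.snoc_last], hlamF⟩
    · intro i
      rcases Fin.eq_castSucc_or_eq_last i with ⟨j, rfl⟩ | rfl
      · rw [Fin.snoc_castSucc]; exact hs j
      · rw [Fin.snoc_last]; exact hsnew
    · rintro ⟨p1, p2⟩ ⟨q1, q2⟩ h
      simp only at h
      rcases Fin.eq_castSucc_or_eq_last p1 with ⟨j, rfl⟩ | rfl <;>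
        rcases Fin.eq_castSucc_or_eq_last q1 with ⟨j', rfl⟩ | rfl
      · rw [Fin.snoc_castSucc, Fin.snoc_castSucc] at h
        have := hinj (a₁ := (j, p2)) (a₂ := (j', q2)) h
        obtain ⟨h1, h2⟩ := Prod.mk_inj.mp this
        rw [h1, h2]
      · rw [Fin.snoc_castSucc, Fin.snoc_last] at h
        exact absurd h.symm (hnotin q2 p2 j)
      · rw [Fin.snoc_castSucc, Fin.snoc_last] at h
        exact absurd h (hnotin p2 q2 j')
      · rw [Fin.snoc_last] at h
        cases p2 <;> cases q2 <;> simp only [Bool.cond_false, Bool.cond_true] at h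
        · rfl
        · exact absurd h hfixnew
        · exact absurd h.symm hfixnew
        · rfl

end Aux19c
section Aux19d

open MeasureTheory

lemma Q_null {Γ V W X Y : Type} [Group Γ] [MulAction Γ V] [MulAction Γ W]
    [MeasurableSpace X] [MeasurableSpace Y]
    (hV : ∀ v : V, (MulAction.orbit Γ v).Infinite)
    (hW : ∀ w : W, (MulAction.orbit Γ w).Infinite)
    {μ : Measure X} {ν : Measure Y} [IsProbabilityMeasure ν]
    {μV : Measure (V → X)} {νW : Measure (W → Y)}
    (hμV : IsProductMeasure μ μV) (hνW : IsProductMeasure ν νW)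
    {θ : (V → X) → (W → Y)} (hθmp : MeasurePreserving θ μV νW)
    (hθeq : ∀ γ : Γ, ∀ᵐ x ∂μV, θ (shiftS γ x) = shiftS γ (θ x))
    {A : Set Y} (hA : MeasurableSet A) (hA0 : 0 < ν A) (hA1 : ν A < 1)
    {T : (V → X) → (V → X)} (hT : MeasurePreserving T μV μV)
    {D : Finset V} (hTloc : ∀ (x : V → X) (v : V), v ∉ D → T x v = x v)
    {γ : Γ} (hγfix : {w : W | γ • w = w}.Finite)
    (s : Finset W) (w₀ : W) :
    μV {x | ∀ w ∉ s, (θ (T x) w ∈ A ↔ θ x (γ⁻¹ • w) ∈ A)} = 0 := by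
  haveI := hμV.1
  haveI := hνW.1
  set r : ℝ≥0∞ := ν A * ν A + ν Aᶜ * ν Aᶜ with hrdef
  have hνA_ne_top : ν A ≠ ⊤ := (lt_of_le_of_lt prob_le_one ENNReal.one_lt_top).ne
  have hνAc : ν Aᶜ = 1 - ν A := prob_compl_eq_one_sub hA
  have hνAc0 : ν Aᶜ ≠ 0 := by
    rw [hνAc]
    exact (tsub_pos_of_lt hA1).ne'
  have hνAc_ne_top : ν Aᶜ ≠ ⊤ := (lt_of_le_of_lt prob_le_one ENNReal.one_lt_top).ne
  have hr1 : r < 1 := by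
    have h1 : ν A * ν A < ν A * 1 := by
      rw [ENNReal.mul_lt_mul_iff_right hA0.ne' hνA_ne_top]
      exact hA1
    have h2 : ν Aᶜ * ν Aᶜ < ν Aᶜ * 1 := by
      rw [ENNReal.mul_lt_mul_iff_right hνAc0 hνAc_ne_top, hνAc]
      exact ENNReal.sub_lt_self ENNReal.one_ne_top one_ne_zero hA0.ne'
    calc r < ν A * 1 + ν Aᶜ * 1 := ENNReal.add_lt_add h1 h2
      _ = 1 := by rw [mul_one, mul_one, hνAc, add_tsub_cancel_of_le hA1.le]
  set Ew : W → Set (V → X) := fun w => {x | θ x w ∈ A} with hEwdef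
  have hEwmeas : ∀ w, MeasurableSet (Ew w) := fun w =>
    hθmp.measurable ((measurable_pi_apply w) hA)
  have key : ∀ (k : ℕ) (ε : ℝ≥0∞), 0 < ε → ε ≠ ⊤ →
      μV {x | ∀ w ∉ s, (θ (T x) w ∈ A ↔ θ x (γ⁻¹ • w) ∈ A)} ≤ r ^ k + k * (2 * ε) := by
    intro k ε hε hεt
    obtain ⟨F, C, hCmeas, hCdet, hCap⟩ := exists_finite_approx μV (hEwmeas w₀) ε hε hεt
    obtain ⟨u, hugood, hus, huinj⟩ := exists_fresh_points hV hW F D w₀ γ hγfix s k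
    have hGbound : ∀ i : Fin k, μV (symmDiff (T ⁻¹' Ew (u i)) (Ew (u i))) ≤ 2 * ε := by
      intro i
      obtain ⟨lam, hlam1, hlam2⟩ := hugood i
      have hS := measurePreserving_shiftS_of_product (Γ := Γ) hμV lam
      have hSlamE_null : μV (symmDiff (Ew (u i)) ((shiftS lam) ⁻¹' Ew w₀)) = 0 := by
        have hae : μV {x | ¬ (θ (shiftS lam x) = shiftS lam (θ x))} = 0 := by
          have h := hθeq lam
          rwa [MeasureTheory.ae_iff] at h
        refine measure_mono_null ?_ hae
        intro x hx
        simp only [Set.mem_setOf_eq]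
        intro heq
        have hiff : x ∈ Ew (u i) ↔ x ∈ (shiftS lam) ⁻¹' Ew w₀ := by
          show θ x (u i) ∈ A ↔ θ (shiftS lam x) w₀ ∈ A
          rw [heq]
          show θ x (u i) ∈ A ↔ θ x (lam⁻¹ • w₀) ∈ A
          rw [hlam1]
        rcases Set.mem_symmDiff.mp hx with ⟨h1, h2⟩ | ⟨h1, h2⟩
        · exact h2 (hiff.mp h1)
        · exact h2 (hiff.mpr h1)
      have hloc : T ⁻¹' ((shiftS lam) ⁻¹' C) = (shiftS lam) ⁻¹' C := by
        ext x
        simp only [Set.mem_preimage]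
        exact hCdet (shiftS lam (T x)) (shiftS lam x) (fun f hf => by
          show (T x) (lam⁻¹ • f) = x (lam⁻¹ • f)
          exact hTloc x _ (hlam2 f hf))
      have hSlamC_meas : MeasurableSet ((shiftS lam) ⁻¹' C) := hS.measurable hCmeas
      have hSlamE_meas : MeasurableSet ((shiftS lam) ⁻¹' Ew w₀) := hS.measurable (hEwmeas w₀)
      have e1 : μV (symmDiff (T ⁻¹' Ew (u i)) ((shiftS lam) ⁻¹' C)) ≤ ε := by
        have heq1 : symmDiff (T ⁻¹' Ew (u i)) ((shiftS lam) ⁻¹' C)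
            = T ⁻¹' (symmDiff (Ew (u i)) ((shiftS lam) ⁻¹' C)) := by
          rw [Set.preimage_symmDiff, hloc]
        rw [heq1, hT.measure_preimage ((hEwmeas (u i)).symmDiff hSlamC_meas).nullMeasurableSet]
        calc μV (symmDiff (Ew (u i)) ((shiftS lam) ⁻¹' C))
            ≤ μV (symmDiff (Ew (u i)) ((shiftS lam) ⁻¹' Ew w₀))
              + μV (symmDiff ((shiftS lam) ⁻¹' Ew w₀) ((shiftS lam) ⁻¹' C)) :=
            measure_symmDiff_le _ _ _
          _ = 0 + μV ((shiftS lam) ⁻¹' (symmDiff (Ew w₀) C)) := by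
              rw [hSlamE_null, Set.preimage_symmDiff]
          _ = μV (symmDiff (Ew w₀) C) := by
              rw [zero_add, hS.measure_preimage ((hEwmeas w₀).symmDiff hCmeas).nullMeasurableSet]
          _ ≤ ε := hCap.le
      have hnull' : μV (symmDiff ((shiftS lam) ⁻¹' Ew w₀) (Ew (u i))) = 0 := by
        rw [symmDiff_comm]; exact hSlamE_null
      have e2 : μV (symmDiff ((shiftS lam) ⁻¹' C) (Ew (u i))) ≤ ε := by
        calc μV (symmDiff ((shiftS lam) ⁻¹' C) (Ew (u i)))
            ≤ μV (symmDiff ((shiftS lam) ⁻¹' C) ((shiftS lam) ⁻¹' Ew w₀))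
              + μV (symmDiff ((shiftS lam) ⁻¹' Ew w₀) (Ew (u i))) := measure_symmDiff_le _ _ _
          _ = μV ((shiftS lam) ⁻¹' (symmDiff C (Ew w₀))) + 0 := by
              rw [Set.preimage_symmDiff, hnull']
          _ = μV (symmDiff (Ew w₀) C) := by
              rw [add_zero, hS.measure_preimage (hCmeas.symmDiff (hEwmeas w₀)).nullMeasurableSet,
                symmDiff_comm]
          _ ≤ ε := hCap.le
      calc μV (symmDiff (T ⁻¹' Ew (u i)) (Ew (u i)))
          ≤ μV (symmDiff (T ⁻¹' Ew (u i)) ((shiftS lam) ⁻¹' C))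
            + μV (symmDiff ((shiftS lam) ⁻¹' C) (Ew (u i))) := measure_symmDiff_le _ _ _
        _ ≤ ε + ε := add_le_add e1 e2
        _ = 2 * ε := (two_mul ε).symm
    have hsub : {x | ∀ w ∉ s, (θ (T x) w ∈ A ↔ θ x (γ⁻¹ • w) ∈ A)} ⊆
        (⋂ i : Fin k, {x | θ x (u i) ∈ A ↔ θ x (γ⁻¹ • u i) ∈ A}) ∪
          ⋃ i : Fin k, symmDiff (T ⁻¹' Ew (u i)) (Ew (u i)) := by
      intro x hx
      by_cases hxd : x ∈ ⋃ i : Fin k, symmDiff (T ⁻¹' Ew (u i)) (Ew (u i))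
      · exact Or.inr hxd
      · refine Or.inl (Set.mem_iInter.mpr fun i => ?_)
        have hns : x ∉ symmDiff (T ⁻¹' Ew (u i)) (Ew (u i)) := fun hc =>
          hxd (Set.mem_iUnion.mpr ⟨i, hc⟩)
        have h1 : (θ (T x) (u i) ∈ A) ↔ (θ x (u i) ∈ A) := by
          by_cases hmem : x ∈ T ⁻¹' Ew (u i) <;> by_cases hmem' : x ∈ Ew (u i)
          · exact iff_of_true hmem hmem'
          · exact absurd (Set.mem_symmDiff.mpr (Or.inl ⟨hmem, hmem'⟩)) hns
          · exact absurd (Set.mem_symmDiff.mpr (Or.inr ⟨hmem', hmem⟩)) hns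
          · exact iff_of_false hmem hmem'
        exact h1.symm.trans (hx (u i) (hus i))
    have hpair_meas : ∀ (a b : W), MeasurableSet {y : W → Y | y a ∈ A ↔ y b ∈ A} := by
      intro a b
      have heq : {y : W → Y | y a ∈ A ↔ y b ∈ A} =
          (((fun y : W → Y => y a) ⁻¹' A) ∩ ((fun y : W → Y => y b) ⁻¹' A)) ∪
          (((fun y : W → Y => y a) ⁻¹' A)ᶜ ∩ ((fun y : W → Y => y b) ⁻¹' A)ᶜ) := by
        ext y
        by_cases h1 : y a ∈ A <;> by_cases h2 : y b ∈ A <;>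
          simp [h1, h2]
      rw [heq]
      exact (((measurable_pi_apply a) hA).inter ((measurable_pi_apply b) hA)).union
        ((((measurable_pi_apply a) hA).compl).inter (((measurable_pi_apply b) hA).compl))
    have hInter : μV (⋂ i : Fin k, {x | θ x (u i) ∈ A ↔ θ x (γ⁻¹ • u i) ∈ A}) = r ^ k := by
      have hpre : (⋂ i : Fin k, {x | θ x (u i) ∈ A ↔ θ x (γ⁻¹ • u i) ∈ A})
          = θ ⁻¹' (⋂ i : Fin k, {y : W → Y | y (u i) ∈ A ↔ y (γ⁻¹ • u i) ∈ A}) := by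
        rw [Set.preimage_iInter]
        rfl
      rw [hpre, hθmp.measure_preimage
        (MeasurableSet.iInter fun i => hpair_meas (u i) (γ⁻¹ • u i)).nullMeasurableSet]
      exact measure_iInter_pair hνW hA huinj
    have hiUnion_le : μV (⋃ i : Fin k, symmDiff (T ⁻¹' Ew (u i)) (Ew (u i))) ≤ k * (2 * ε) := by
      calc μV (⋃ i : Fin k, symmDiff (T ⁻¹' Ew (u i)) (Ew (u i)))
          ≤ ∑' i : Fin k, μV (symmDiff (T ⁻¹' Ew (u i)) (Ew (u i))) := measure_iUnion_le _
        _ = ∑ i : Fin k, μV (symmDiff (T ⁻¹' Ew (u i)) (Ew (u i))) := tsum_fintype _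
        _ ≤ ∑ _i : Fin k, (2 * ε) := Finset.sum_le_sum fun i _ => hGbound i
        _ = k * (2 * ε) := by
            rw [Finset.sum_const, Finset.card_univ, Fintype.card_fin, nsmul_eq_mul]
    calc μV {x | ∀ w ∉ s, (θ (T x) w ∈ A ↔ θ x (γ⁻¹ • w) ∈ A)}
        ≤ μV ((⋂ i : Fin k, {x | θ x (u i) ∈ A ↔ θ x (γ⁻¹ • u i) ∈ A}) ∪
            ⋃ i : Fin k, symmDiff (T ⁻¹' Ew (u i)) (Ew (u i))) := measure_mono hsub
      _ ≤ μV (⋂ i : Fin k, {x | θ x (u i) ∈ A ↔ θ x (γ⁻¹ • u i) ∈ A}) +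
            μV (⋃ i : Fin k, symmDiff (T ⁻¹' Ew (u i)) (Ew (u i))) := measure_union_le _ _
      _ ≤ r ^ k + k * (2 * ε) := add_le_add hInter.le hiUnion_le
  have hk : ∀ k : ℕ, μV {x | ∀ w ∉ s, (θ (T x) w ∈ A ↔ θ x (γ⁻¹ • w) ∈ A)} ≤ r ^ k := by
    intro k
    refine ENNReal.le_of_forall_pos_le_add fun η hη _ => ?_
    set c : ℝ≥0∞ := 2 * ((k : ℝ≥0∞) + 1) with hcdef
    have hc0 : c ≠ 0 := by simp [hcdef]
    have hct : c ≠ ⊤ := by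
      simp only [hcdef]
      exact ENNReal.mul_ne_top (by norm_num) (by simp [ENNReal.add_ne_top])
    set ε : ℝ≥0∞ := (η : ℝ≥0∞) / c with hεdef
    have hε0 : 0 < ε := ENNReal.div_pos (ENNReal.coe_ne_zero.mpr hη.ne') hct
    have hεt : ε ≠ ⊤ := (ENNReal.div_lt_top ENNReal.coe_ne_top hc0).ne
    refine (key k ε hε0 hεt).trans (add_le_add le_rfl ?_)
    calc (k : ℝ≥0∞) * (2 * ε) = (2 * (k : ℝ≥0∞)) * ε := by ring
      _ ≤ c * ε := by
          refine mul_le_mul_left ?_ ε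
          rw [hcdef]
          exact mul_le_mul_right (le_add_of_nonneg_right zero_le) 2
      _ ≤ (η : ℝ≥0∞) := by rw [hεdef]; exact ENNReal.mul_div_le
  have htend := ENNReal.tendsto_pow_atTop_nhds_zero_of_lt_one hr1
  have hle := ge_of_tendsto htend (Filter.Eventually.of_forall hk)
  exact le_antisymm hle zero_le

end Aux19d
section Aux19e

open MeasureTheory

lemma exists_conull_singleton {Y : Type} [MeasurableSpace Y] [StandardBorelSpace Y]
    (ν : Measure Y) [IsProbabilityMeasure ν]
    (h01 : ∀ A : Set Y, MeasurableSet A → ν A = 0 ∨ ν A = 1) :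
    ∃ y₀ : Y, ν {y₀} = 1 := by
  classical
  obtain ⟨S, hSc, hSm, hSsep⟩ := exists_countable_separating Y MeasurableSet Set.univ
  set K : Set Y := ⋂ t ∈ S, (if ν t = 1 then t else tᶜ) with hKdef
  have hKmeas : MeasurableSet K := MeasurableSet.biInter hSc fun t ht => by
    split_ifs; exacts [hSm t ht, (hSm t ht).compl]
  have hKcompl : ν Kᶜ = 0 := by
    rw [hKdef, Set.compl_iInter₂]
    rw [measure_biUnion_null_iff hSc]
    intro t ht
    by_cases hν : ν t = 1
    · rw [if_pos hν]
      rw [prob_compl_eq_zero_iff (hSm t ht)]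
      exact hν
    · rw [if_neg hν, compl_compl]
      rcases h01 t (hSm t ht) with h0 | h1
      · exact h0
      · exact absurd h1 hν
  have hKcon : ν K = 1 := by
    rw [← prob_compl_eq_zero_iff hKmeas]
    exact hKcompl
  obtain ⟨y₀, hy₀⟩ := nonempty_of_measure_ne_zero (hKcon ▸ one_ne_zero)
  refine ⟨y₀, le_antisymm prob_le_one ?_⟩
  have hKsub : K ⊆ {y₀} := by
    intro y hy
    have : y = y₀ := by
      refine hSsep y (Set.mem_univ y) y₀ (Set.mem_univ y₀) fun t ht => ?_
      have hy' := Set.mem_iInter₂.mp hy t ht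
      have hy₀' := Set.mem_iInter₂.mp hy₀ t ht
      by_cases hν : ν t = 1
      · rw [if_pos hν] at hy' hy₀'
        exact iff_of_true hy' hy₀'
      · rw [if_neg hν] at hy' hy₀'
        exact iff_of_false hy' hy₀'
    exact this
  calc (1 : ℝ≥0∞) = ν K := hKcon.symm
    _ ≤ ν {y₀} := measure_mono hKsub

end Aux19e
/-- Let `Γ` act on countable sets `V` and `W` with all orbits infinite,
every nonidentity element fixing only finitely many points of `W`. If `θ` is a measure
preserving `Γ`-equivariant map sending `B ≀_V Γ`-orbits into `C ≀_W Γ`-orbits, then `θ`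
sends `⊕_V B`-orbits into `⊕_W C`-orbits. -/
theorem equivariant_map_sends_dsum_orbits_into_dsum_orbits
    (Γ V W B C X Y : Type) [Group Γ] [Countable Γ] [Countable V] [Countable W]
    [MulAction Γ V] [MulAction Γ W] [Group B] [Countable B] [Group C] [Countable C]
    (hV : ∀ v : V, (MulAction.orbit Γ v).Infinite)
    (hW : ∀ w : W, (MulAction.orbit Γ w).Infinite)
    (hWfix : ∀ γ : Γ, γ ≠ 1 → {w : W | γ • w = w}.Finite)
    [MeasurableSpace X] [MeasurableSpace Y] [StandardBorelSpace X] [StandardBorelSpace Y]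
    (μ : Measure X) (ν : Measure Y) [IsProbabilityMeasure μ] [IsProbabilityMeasure ν]
    (b : B → X → X) (c : C → Y → Y) (hb : IsPmpAction b μ) (hc : IsPmpAction c ν)
    (μV : Measure (V → X)) (νW : Measure (W → Y))
    (hμV : IsProductMeasure μ μV) (hνW : IsProductMeasure ν νW)
    (θ : (V → X) → (W → Y)) (hθmp : MeasurePreserving θ μV νW)
    (hθeq : ∀ γ : Γ, ∀ᵐ x ∂μV, θ (shiftS γ x) = shiftS γ (θ x))
    (hθorb : ∀ᵐ x ∂μV, ∀ g : pwreath V B Γ, ∃ h : pwreath W C Γ,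
      θ (wreathSmul b g x) = wreathSmul c h (θ x)) :
    ∀ᵐ x ∂μV, ∀ d : dsum V B, ∃ e : dsum W C,
      θ (dsumSmul b d x) = dsumSmul c e (θ x) := by
  classical
  haveI := hμV.1
  haveI := hνW.1
  rw [MeasureTheory.ae_all_iff]
  intro d
  have hdfin : (Function.mulSupport (d : V → B)).Finite := d.2
  set T : (V → X) → (V → X) := dsumSmul b d with hTdef
  have hT : MeasurePreserving T μV μV :=
    measurePreserving_pi_map hμV (fun v => b ((d : V → B) v))
      (fun v => hb.2.2.2 ((d : V → B) v))
  have hTloc : ∀ (x : V → X) (v : V), v ∉ hdfin.toFinset → T x v = x v := by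
    intro x v hv
    have h1 : (d : V → B) v = 1 := by
      by_contra hne
      exact hv (hdfin.mem_toFinset.mpr (Function.mem_mulSupport.mpr hne))
    show b ((d : V → B) v) (x v) = x v
    rw [h1]
    exact hb.2.1 (x v)
  rcases isEmpty_or_nonempty W with hWe | hWne
  · filter_upwards with x
    exact ⟨1, funext fun w => (hWe.false w).elim⟩
  obtain ⟨w₀⟩ := hWne
  by_cases hdeg : ∃ A : Set Y, MeasurableSet A ∧ 0 < ν A ∧ ν A < 1
  · obtain ⟨A, hA, hA0, hA1⟩ := hdeg
    have hQ : ∀ (γ : Γ), γ ≠ 1 → ∀ sfin : Finset W,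
        μV {x | ∀ w ∉ sfin, (θ (T x) w ∈ A ↔ θ x (γ⁻¹ • w) ∈ A)} = 0 := fun γ hγ sfin =>
      Q_null hV hW hμV hνW hθmp hθeq hA hA0 hA1 hT hTloc (hWfix γ hγ) sfin w₀
    have hbig : ∀ᵐ x ∂μV, ∀ (γ : Γ) (sfin : Finset W), γ ≠ 1 →
        ¬ (∀ w ∉ sfin, (θ (T x) w ∈ A ↔ θ x (γ⁻¹ • w) ∈ A)) := by
      rw [MeasureTheory.ae_all_iff]
      intro γ
      rw [MeasureTheory.ae_all_iff]
      intro sfin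
      rcases eq_or_ne γ 1 with rfl | hγ
      · filter_upwards with x h
        exact absurd rfl h
      · have h0 := measure_eq_zero_iff_ae_notMem.mp (hQ γ hγ sfin)
        filter_upwards [h0] with x hx _
        exact hx
    filter_upwards [hθorb, hbig] with x horb hng
    obtain ⟨h, hh⟩ := horb ⟨d, 1⟩
    have hTx : wreathSmul b (⟨d, 1⟩ : pwreath V B Γ) x = T x := by
      funext v
      show b ((d : V → B) v) (x ((1 : Γ)⁻¹ • v)) = b ((d : V → B) v) (x v)
      rw [inv_one, one_smul]
    rw [hTx] at hh
    rcases eq_or_ne h.right 1 with hγ1 | hγ1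
    · refine ⟨h.left, ?_⟩
      rw [hh]
      funext w
      show c ((h.left : W → C) w) (θ x (h.right⁻¹ • w)) = c ((h.left : W → C) w) (θ x w)
      rw [hγ1, inv_one, one_smul]
    · exfalso
      have hefin : (Function.mulSupport (h.left : W → C)).Finite := h.left.2
      refine hng h.right hefin.toFinset hγ1 ?_
      intro w hw
      have hew : (h.left : W → C) w = 1 := by
        by_contra hne
        exact hw (hefin.mem_toFinset.mpr (Function.mem_mulSupport.mpr hne))
      have hval : θ (T x) w = θ x (h.right⁻¹ • w) := by
        have hcw := congrFun hh w
        rw [hcw]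
        show c ((h.left : W → C) w) (θ x (h.right⁻¹ • w)) = θ x (h.right⁻¹ • w)
        rw [hew]
        exact hc.2.1 _
      rw [hval]
  · push_neg at hdeg
    have h01 : ∀ A : Set Y, MeasurableSet A → ν A = 0 ∨ ν A = 1 := by
      intro A hA
      rcases eq_or_ne (ν A) 0 with h0 | h0
      · exact Or.inl h0
      · exact Or.inr (le_antisymm prob_le_one (hdeg A hA (pos_iff_ne_zero.mpr h0)))
    obtain ⟨y₀, hy₀⟩ := exists_conull_singleton ν h01
    have hSw : ∀ w : W, νW {y : W → Y | y w = y₀} = 1 := by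
      intro w
      have hbox := hνW.2 {w} (fun _ => ({y₀} : Set Y)) (fun _ => measurableSet_singleton y₀)
      rw [Finset.prod_singleton] at hbox
      have hset : {y : W → Y | ∀ i ∈ ({w} : Finset W), y i ∈ ({y₀} : Set Y)}
          = {y : W → Y | y w = y₀} := by
        ext y
        simp
      rw [hset] at hbox
      rw [hbox, hy₀]
    have hSwmeas : ∀ w : W, MeasurableSet {y : W → Y | y w = y₀} := by
      intro w
      have hrw : {y : W → Y | y w = y₀} = (fun y : W → Y => y w) ⁻¹' {y₀} := by
        ext y; simp
      rw [hrw]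
      exact (measurable_pi_apply w) (measurableSet_singleton y₀)
    have hΩ : νW {y : W → Y | ∀ w, y w = y₀}ᶜ = 0 := by
      have hcompl : {y : W → Y | ∀ w, y w = y₀}ᶜ = ⋃ w : W, {y : W → Y | y w = y₀}ᶜ := by
        ext y
        simp [not_forall]
      rw [hcompl]
      refine measure_iUnion_null fun w => ?_
      rw [prob_compl_eq_zero_iff (hSwmeas w)]
      exact hSw w
    have hΩmeas : MeasurableSet {y : W → Y | ∀ w, y w = y₀} := by
      have : {y : W → Y | ∀ w, y w = y₀} = ⋂ w : W, {y : W → Y | y w = y₀} := by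
        ext y; simp
      rw [this]
      exact MeasurableSet.iInter fun w => hSwmeas w
    have h1 : μV (θ ⁻¹' {y : W → Y | ∀ w, y w = y₀}ᶜ) = 0 := by
      rw [hθmp.measure_preimage hΩmeas.compl.nullMeasurableSet]
      exact hΩ
    have h2 : μV (T ⁻¹' (θ ⁻¹' {y : W → Y | ∀ w, y w = y₀}ᶜ)) = 0 := by
      rw [hT.measure_preimage (hθmp.measurable hΩmeas.compl).nullMeasurableSet]
      exact h1
    have hae1 : ∀ᵐ x ∂μV, x ∉ θ ⁻¹' {y : W → Y | ∀ w, y w = y₀}ᶜ :=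
      measure_eq_zero_iff_ae_notMem.mp h1
    have hae2 : ∀ᵐ x ∂μV, x ∉ T ⁻¹' (θ ⁻¹' {y : W → Y | ∀ w, y w = y₀}ᶜ) :=
      measure_eq_zero_iff_ae_notMem.mp h2
    filter_upwards [hae1, hae2] with x hx1 hx2
    refine ⟨1, funext fun w => ?_⟩
    have hx1' : ∀ w, θ x w = y₀ := by
      by_contra hc
      exact hx1 hc
    have hx2' : ∀ w, θ (T x) w = y₀ := by
      by_contra hc
      exact hx2 hc
    show θ (T x) w = c (((1 : dsum W C) : W → C) w) (θ x w)
    have hone : ((1 : dsum W C) : W → C) w = 1 := rfl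
    rw [hone, hc.2.1 (θ x w), hx1' w, hx2' w]

end OEW
end
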